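/- arXiv:1712.04677 — 7 statements merged into one kernel-verified Lean document; each statement's English description precedes it below -/
import Mathlib

section
/- Assume the primal problem defining Jₙ is feasible. Then the duality gap between Jₙ and J̃ₙ is zero: Jₙ = J̃ₙ. If, in addition, there exists γ > 0 such that ‖(y(b₁),…,y(bₙ))‖_{R*} ≥ γ‖y‖_* for every y ∈ 𝕂* and θ_P is large enough that γθ_P > ‖b‖, then every optimizer y* of the dual problem J̃ₙ satisfies ‖y*‖_* ≤ (θ_P‖c‖_{R*} − Jₙ^{LB}) / (γθ_P − ‖b‖) for any lower bound Jₙ^{LB} ≤ Jₙ; in particular ‖y*‖_* ≤ 2θ_P‖c‖_{R*} / (γθ_P − ‖b‖). -/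
/-- The dual norm on `ℝⁿ` induced by a norm `R` and the standard bilinear pairing. -/
noncomputable def dualNormR {n : ℕ} (R : (Fin n → ℝ) → ℝ) (z : Fin n → ℝ) : ℝ :=
  sSup {t | ∃ α : Fin n → ℝ, R α ≤ 1 ∧ t = ∑ i, α i * z i}

section RNorm
variable {n : ℕ} {R : (Fin n → ℝ) → ℝ}
  (hRtri : ∀ α β, R (α + β) ≤ R α + R β)
  (hRsmul : ∀ (a : ℝ) (α), R (a • α) = |a| * R α)
  (hRdef : ∀ α, R α = 0 → α = 0)

include hRsmul in
lemma R_zero : R 0 = 0 := by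
  have := hRsmul 0 0
  simpa using this

include hRtri hRsmul in
lemma R_nonneg (α : Fin n → ℝ) : 0 ≤ R α := by
  have h1 := hRtri α (-α)
  have h2 : R (-α) = R α := by
    have := hRsmul (-1) α; simpa using this
  have h0 : R 0 = 0 := R_zero hRsmul
  have : α + (-α) = 0 := by abel
  rw [this, h0] at h1
  linarith [h1, h2 ▸ h1]

include hRtri hRsmul in
lemma R_sum_le {ι : Type*} (s : Finset ι) (f : ι → (Fin n → ℝ)) :
    R (∑ i ∈ s, f i) ≤ ∑ i ∈ s, R (f i) := by
  classical
  induction s using Finset.induction with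
  | empty => simp [R_zero hRsmul]
  | insert _ _ hx ih =>
    rw [Finset.sum_insert hx, Finset.sum_insert hx]
    exact le_trans (hRtri _ _) (by linarith)

include hRtri hRsmul in
lemma R_le_mul_norm : ∃ M : ℝ, 0 ≤ M ∧ ∀ α : Fin n → ℝ, R α ≤ M * ‖α‖ := by
  classical
  refine ⟨∑ i, R (Pi.single i 1), Finset.sum_nonneg fun i _ => R_nonneg hRtri hRsmul _, ?_⟩
  intro α
  have hdec : α = ∑ i, α i • (Pi.single i 1 : Fin n → ℝ) := by
    ext j; simp [Pi.single_apply, Finset.sum_apply, smul_eq_mul, mul_comm]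
  calc R α = R (∑ i, α i • (Pi.single i 1 : Fin n → ℝ)) := by rw [← hdec]
    _ ≤ ∑ i, R (α i • (Pi.single i 1 : Fin n → ℝ)) := R_sum_le hRtri hRsmul _ _
    _ = ∑ i, |α i| * R (Pi.single i 1) := by simp [hRsmul]
    _ ≤ ∑ i, ‖α‖ * R (Pi.single i 1) := by
        refine Finset.sum_le_sum fun i _ => ?_
        exact mul_le_mul_of_nonneg_right
          (by simpa using norm_le_pi_norm α i) (R_nonneg hRtri hRsmul _)
    _ = (∑ i, R (Pi.single i 1)) * ‖α‖ := by rw [Finset.sum_mul]; exact Finset.sum_congr rfl fun i _ => mul_comm _ _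

include hRtri hRsmul in
lemma R_continuous : Continuous R := by
  obtain ⟨M, hM0, hM⟩ := R_le_mul_norm hRtri hRsmul
  have : LipschitzWith (Real.toNNReal M) R := by
    refine LipschitzWith.of_dist_le_mul fun x y => ?_
    rw [Real.dist_eq, dist_eq_norm, abs_sub_le_iff]
    constructor
    · have h1 := hRtri y (x - y)
      have hyx : y + (x - y) = x := by abel
      rw [hyx] at h1
      have h2 := hM (x - y)
      calc R x - R y ≤ R (x - y) := by linarith
        _ ≤ M * ‖x - y‖ := h2
        _ ≤ Real.toNNReal M * ‖x - y‖ := by rw [Real.coe_toNNReal M hM0]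
    · have h1 := hRtri x (y - x)
      have hx : x + (y - x) = y := by abel
      rw [hx] at h1
      have h3 : R (y - x) = R (x - y) := by
        have := hRsmul (-1) (x - y)
        simp only [neg_smul, one_smul, abs_neg, abs_one, one_mul] at this
        rw [← this]; congr 1; abel
      calc R y - R x ≤ R (y - x) := by linarith
        _ = R (x - y) := h3
        _ ≤ M * ‖x - y‖ := hM _
        _ ≤ Real.toNNReal M * ‖x - y‖ := by rw [Real.coe_toNNReal M hM0]
  exact this.continuous

include hRtri hRsmul hRdef in
lemma R_ge_mul_norm : ∃ m : ℝ, 0 < m ∧ ∀ α : Fin n → ℝ, m * ‖α‖ ≤ R α := by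
  classical
  rcases Nat.eq_zero_or_pos n with hn | hn
  · refine ⟨1, one_pos, fun α => ?_⟩
    haveI : Subsingleton (Fin n → ℝ) := by subst hn; infer_instance
    have hα : α = 0 := Subsingleton.elim _ _
    rw [hα, R_zero hRsmul]; simp
  · obtain ⟨M, hM0, hM⟩ := R_le_mul_norm hRtri hRsmul
    have hcont : Continuous R := by
      have : LipschitzWith (Real.toNNReal M) R := by
        refine LipschitzWith.of_dist_le_mul fun x y => ?_
        rw [Real.dist_eq, dist_eq_norm, abs_sub_le_iff]
        constructor
        · have h1 := hRtri y (x - y)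
          have : y + (x - y) = x := by abel
          rw [this] at h1
          have h2 := hM (x - y)
          have : ‖x - y‖ = |‖x - y‖| := (abs_of_nonneg (norm_nonneg _)).symm
          calc R x - R y ≤ R (x - y) := by linarith
            _ ≤ M * ‖x - y‖ := h2
            _ ≤ Real.toNNReal M * ‖x - y‖ := by
                rw [Real.coe_toNNReal M hM0]
        · have h1 := hRtri x (y - x)
          have hx : x + (y - x) = y := by abel
          rw [hx] at h1
          have h2 := hM (y - x)
          have h3 : R (y - x) = R (x - y) := by
            have := hRsmul (-1) (x - y)
            simp only [neg_smul, one_smul, abs_neg, abs_one, one_mul] at this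
            rw [← this]; congr 1; abel
          have h4 : ‖y - x‖ = ‖x - y‖ := norm_sub_rev _ _
          calc R y - R x ≤ R (y - x) := by linarith
            _ ≤ M * ‖x - y‖ := by rw [← h4]; exact hM _
            _ ≤ Real.toNNReal M * ‖x - y‖ := by
                rw [Real.coe_toNNReal M hM0]
      exact this.continuous
    have hcs : IsCompact (Metric.sphere (0 : Fin n → ℝ) 1) := isCompact_sphere _ _
    have hne : (Metric.sphere (0 : Fin n → ℝ) 1).Nonempty := by
      haveI : Nonempty (Fin n) := ⟨⟨0, hn⟩⟩
      refine ⟨fun _ => 1, ?_⟩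
      simp [Metric.mem_sphere, dist_eq_norm]
    obtain ⟨x0, hx0mem, hx0minOn⟩ := hcs.exists_isMinOn hne hcont.continuousOn
    have hx0min : ∀ x ∈ Metric.sphere (0 : Fin n → ℝ) 1, R x0 ≤ R x := fun x hx => hx0minOn hx
    have hx0norm : ‖x0‖ = 1 := by simpa [dist_eq_norm] using hx0mem
    have hx0ne : x0 ≠ 0 := by
      intro h; rw [h] at hx0norm; simp at hx0norm
    have hm0 : 0 < R x0 := by
      rcases lt_or_eq_of_le (R_nonneg hRtri hRsmul x0) with h | h
      · exact h
      · exact absurd (hRdef x0 h.symm) hx0ne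
    refine ⟨R x0, hm0, fun α => ?_⟩
    rcases eq_or_ne α 0 with rfl | hα
    · simp [R_zero hRsmul]
    · have hαn : 0 < ‖α‖ := norm_pos_iff.mpr hα
      have hmem : ‖α‖⁻¹ • α ∈ Metric.sphere (0 : Fin n → ℝ) 1 := by
        simp [Metric.mem_sphere, dist_eq_norm, norm_smul, abs_of_pos (inv_pos.mpr hαn),
          inv_mul_cancel₀ (ne_of_gt hαn)]
      have := hx0min _ hmem
      have heq : R (‖α‖⁻¹ • α) = ‖α‖⁻¹ * R α := by
        rw [hRsmul]; congr 1; exact abs_of_pos (inv_pos.mpr hαn)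
      rw [heq] at this
      calc R x0 * ‖α‖ ≤ (‖α‖⁻¹ * R α) * ‖α‖ :=
            mul_le_mul_of_nonneg_right this (le_of_lt hαn)
        _ = R α := by field_simp

end RNorm
section DualNorm
variable {n : ℕ} {R : (Fin n → ℝ) → ℝ}
  (hRtri : ∀ α β, R (α + β) ≤ R α + R β)
  (hRsmul : ∀ (a : ℝ) (α), R (a • α) = |a| * R α)
  (hRdef : ∀ α, R α = 0 → α = 0)

include hRsmul in
lemma Dset_nonempty (z : Fin n → ℝ) :
    {t | ∃ α : Fin n → ℝ, R α ≤ 1 ∧ t = ∑ i, α i * z i}.Nonempty :=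
  ⟨0, 0, by rw [R_zero hRsmul]; norm_num, by simp⟩

include hRtri hRsmul hRdef in
lemma Dset_bddAbove (z : Fin n → ℝ) :
    BddAbove {t | ∃ α : Fin n → ℝ, R α ≤ 1 ∧ t = ∑ i, α i * z i} := by
  obtain ⟨m, hm0, hm⟩ := R_ge_mul_norm hRtri hRsmul hRdef
  refine ⟨m⁻¹ * ∑ i, |z i|, fun t ht => ?_⟩
  obtain ⟨α, hα, rfl⟩ := ht
  have hαn : ‖α‖ ≤ m⁻¹ := by
    have h1 : m * ‖α‖ ≤ 1 := le_trans (hm α) hα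
    calc ‖α‖ = m⁻¹ * (m * ‖α‖) := by field_simp
      _ ≤ m⁻¹ * 1 := mul_le_mul_of_nonneg_left h1 (le_of_lt (inv_pos.mpr hm0))
      _ = m⁻¹ := mul_one _
  calc ∑ i, α i * z i ≤ ∑ i, |α i * z i| :=
        Finset.sum_le_sum fun i _ => le_abs_self _
    _ = ∑ i, |α i| * |z i| := by simp [abs_mul]
    _ ≤ ∑ i, m⁻¹ * |z i| := Finset.sum_le_sum fun i _ =>
        mul_le_mul_of_nonneg_right
          (le_trans (by simpa using norm_le_pi_norm α i) hαn) (abs_nonneg _)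
    _ = m⁻¹ * ∑ i, |z i| := by rw [Finset.mul_sum]

include hRtri hRsmul hRdef in
lemma dualNormR_nonneg (z : Fin n → ℝ) : 0 ≤ dualNormR R z :=
  le_csSup (Dset_bddAbove hRtri hRsmul hRdef z) ⟨0, by rw [R_zero hRsmul]; norm_num, by simp⟩

include hRtri hRsmul hRdef in
lemma pairing_le_one (z α : Fin n → ℝ) (hα : R α ≤ 1) :
    ∑ i, α i * z i ≤ dualNormR R z :=
  le_csSup (Dset_bddAbove hRtri hRsmul hRdef z) ⟨α, hα, rfl⟩

include hRtri hRsmul hRdef in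
lemma pairing_le (z α : Fin n → ℝ) (θ : ℝ) (hθ : 0 < θ) (hα : R α ≤ θ) :
    ∑ i, α i * z i ≤ θ * dualNormR R z := by
  have h1 : R (θ⁻¹ • α) ≤ 1 := by
    rw [hRsmul, abs_of_pos (inv_pos.mpr hθ)]
    rw [inv_mul_le_iff₀ hθ, mul_one]; exact hα
  have h2 := pairing_le_one hRtri hRsmul hRdef z (θ⁻¹ • α) h1
  have h3 : ∑ i, (θ⁻¹ • α) i * z i = θ⁻¹ * ∑ i, α i * z i := by
    rw [Finset.mul_sum]; exact Finset.sum_congr rfl fun i _ => by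
      simp [smul_eq_mul]; ring
  rw [h3] at h2
  calc ∑ i, α i * z i = θ * (θ⁻¹ * ∑ i, α i * z i) := by field_simp
    _ ≤ θ * dualNormR R z := mul_le_mul_of_nonneg_left h2 (le_of_lt hθ)

include hRtri hRsmul hRdef in
lemma dualNormR_add_le (w z : Fin n → ℝ) :
    dualNormR R (fun i => w i + z i) ≤ dualNormR R w + dualNormR R z := by
  apply csSup_le (Dset_nonempty hRsmul _)
  rintro t ⟨α, hα, rfl⟩
  have h1 := pairing_le_one hRtri hRsmul hRdef w α hα
  have h2 := pairing_le_one hRtri hRsmul hRdef z α hα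
  have : ∑ i, α i * (w i + z i) = (∑ i, α i * w i) + ∑ i, α i * z i := by
    rw [← Finset.sum_add_distrib]; exact Finset.sum_congr rfl fun i _ => by ring
  rw [this]; exact add_le_add h1 h2

omit hRtri hRdef in
include hRsmul in
lemma dualNormR_le_of_forall (v : Fin n → ℝ) (θ Mb : ℝ) (hθ : 0 < θ)
    (h : ∀ α : Fin n → ℝ, R α ≤ θ → ∑ i, α i * v i ≤ Mb) :
    θ * dualNormR R v ≤ Mb := by
  rw [mul_comm, ← le_div_iff₀ hθ]
  apply csSup_le (Dset_nonempty hRsmul _)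
  rintro t ⟨β, hβ, rfl⟩
  have hθβ : R (θ • β) ≤ θ := by
    rw [hRsmul, abs_of_pos hθ]; nlinarith
  have := h (θ • β) hθβ
  have he : ∑ i, (θ • β) i * v i = θ * ∑ i, β i * v i := by
    rw [Finset.mul_sum]; exact Finset.sum_congr rfl fun i _ => by simp [smul_eq_mul]; ring
  rw [he] at this
  rw [le_div_iff₀ hθ]; linarith

end DualNorm
open Pointwise in
set_option maxHeartbeats 1000000 in
theorem stmt0
    {B : Type*} [NormedAddCommGroup B] [NormedSpace ℝ B]
    (K : Set B) (hKclosed : IsClosed K) (hKconvex : Convex ℝ K)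
    (hKcone : ∀ t : ℝ, 0 ≤ t → ∀ v ∈ K, t • v ∈ K)
    {n : ℕ} (b0 : B) (b : Fin n → B) (c : Fin n → ℝ)
    (R : (Fin n → ℝ) → ℝ)
    (hRtri : ∀ α β, R (α + β) ≤ R α + R β)
    (hRsmul : ∀ (a : ℝ) (α), R (a • α) = |a| * R α)
    (hRdef : ∀ α, R α = 0 → α = 0)
    (θP : ℝ) (hθP : 0 < θP)
    (Jn Jtn : ℝ)
    (hJn : Jn = sInf {t | ∃ α : Fin n → ℝ,
      R α ≤ θP ∧ (∑ i, α i • b i) - b0 ∈ K ∧ t = ∑ i, α i * c i})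
    (hJtn : Jtn = sSup {t | ∃ y : B →L[ℝ] ℝ, (∀ v ∈ K, 0 ≤ y v) ∧
      t = y b0 - θP * dualNormR R (fun i => y (b i) - c i)})
    (hfeas : ∃ α : Fin n → ℝ, R α ≤ θP ∧ (∑ i, α i • b i) - b0 ∈ K) :
    Jn = Jtn ∧
      ∀ γ : ℝ, 0 < γ →
        (∀ y : B →L[ℝ] ℝ, (∀ v ∈ K, 0 ≤ y v) →
          γ * ‖y‖ ≤ dualNormR R (fun i => y (b i))) →
        ‖b0‖ < γ * θP →
        ∀ ystar : B →L[ℝ] ℝ, (∀ v ∈ K, 0 ≤ ystar v) →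
          ystar b0 - θP * dualNormR R (fun i => ystar (b i) - c i) = Jtn →
          (∀ JLB : ℝ, JLB ≤ Jn →
            ‖ystar‖ ≤ (θP * dualNormR R c - JLB) / (γ * θP - ‖b0‖)) ∧
          ‖ystar‖ ≤ 2 * θP * dualNormR R c / (γ * θP - ‖b0‖) := by
  classical
  have hRneg : ∀ α : Fin n → ℝ, R (-α) = R α := by
    intro α; have := hRsmul (-1) α; simpa using this
  set P : Set ℝ := {t | ∃ α : Fin n → ℝ,
      R α ≤ θP ∧ (∑ i, α i • b i) - b0 ∈ K ∧ t = ∑ i, α i * c i} with hPdef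
  set Q : Set ℝ := {t | ∃ y : B →L[ℝ] ℝ, (∀ v ∈ K, 0 ≤ y v) ∧
      t = y b0 - θP * dualNormR R (fun i => y (b i) - c i)} with hQdef
  -- basic facts
  have hPne : P.Nonempty := by
    obtain ⟨α, hα, hk⟩ := hfeas
    exact ⟨∑ i, α i * c i, α, hα, hk, rfl⟩
  have hsum_neg : ∀ (α z : Fin n → ℝ), ∑ i, (-α) i * z i = -∑ i, α i * z i := by
    intro α z
    rw [← Finset.sum_neg_distrib]
    exact Finset.sum_congr rfl fun i _ => by simp
  have hPlb : ∀ t ∈ P, -(θP * dualNormR R c) ≤ t := by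
    rintro t ⟨α, hα, _, rfl⟩
    have hn : R (-α) ≤ θP := by rw [hRneg]; exact hα
    have := pairing_le hRtri hRsmul hRdef c (-α) θP hθP hn
    rw [hsum_neg] at this
    linarith
  have hPbdd : BddBelow P := ⟨-(θP * dualNormR R c), fun t ht => hPlb t ht⟩
  have hQne : Q.Nonempty := by
    refine ⟨(0 : B →L[ℝ] ℝ) b0 - θP * dualNormR R (fun i => (0 : B →L[ℝ] ℝ) (b i) - c i),
      0, fun v _ => le_refl 0, rfl⟩
  -- weak duality
  have hweak_el : ∀ t ∈ Q, ∀ s ∈ P, t ≤ s := by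
    rintro t ⟨y, hy, rfl⟩ s ⟨α, hα, hk, rfl⟩
    have h0 : 0 ≤ y ((∑ i, α i • b i) - b0) := hy _ hk
    have hy1 : y ((∑ i, α i • b i) - b0) = (∑ i, α i * y (b i)) - y b0 := by
      rw [map_sub, map_sum]
      simp [smul_eq_mul]
    have hpair := pairing_le hRtri hRsmul hRdef (fun i => y (b i) - c i) α θP hθP hα
    have hs : ∑ i, α i * (y (b i) - c i)
        = (∑ i, α i * y (b i)) - ∑ i, α i * c i := by
      rw [← Finset.sum_sub_distrib]
      exact Finset.sum_congr rfl fun i _ => by ring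
    rw [hs] at hpair
    rw [hy1] at h0
    linarith
  have hQbdd : BddAbove Q := by
    obtain ⟨s0, hs0⟩ := hPne
    exact ⟨s0, fun t ht => hweak_el t ht s0 hs0⟩
  have hweak : Jtn ≤ Jn := by
    rw [hJn, hJtn]
    exact le_csInf hPne fun s hs => csSup_le hQne fun t ht => hweak_el t ht s hs
  -- cone facts
  obtain ⟨α0, hα0R, hα0K⟩ := hfeas
  have h0K : (0 : B) ∈ K := by
    have := hKcone 0 le_rfl _ hα0K
    simpa using this
  have hKadd : ∀ k1 ∈ K, ∀ k2 ∈ K, k1 + k2 ∈ K := by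
    intro k1 hk1 k2 hk2
    have hmid : (1/2 : ℝ) • k1 + (1/2 : ℝ) • k2 ∈ K :=
      hKconvex hk1 hk2 (by norm_num) (by norm_num) (by norm_num)
    have := hKcone 2 (by norm_num) _ hmid
    simpa [smul_add, smul_smul] using this
  -- strong duality
  have hstrong : Jn ≤ Jtn := by
    refine le_of_forall_pos_le_add fun ε hε => ?_
    obtain ⟨m, hm0, hm⟩ := R_ge_mul_norm hRtri hRsmul hRdef
    -- the compact ball
    have hBRclosed : IsClosed {α : Fin n → ℝ | R α ≤ θP} :=
      IsClosed.preimage (R_continuous hRtri hRsmul) isClosed_Iic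
    have hBRsub : {α : Fin n → ℝ | R α ≤ θP} ⊆ Metric.closedBall 0 (θP / m) := by
      intro α hα
      rw [Metric.mem_closedBall, dist_zero_right]
      rw [le_div_iff₀ hm0]
      calc ‖α‖ * m = m * ‖α‖ := mul_comm _ _
        _ ≤ R α := hm α
        _ ≤ θP := hα
    have hBRcpt : IsCompact {α : Fin n → ℝ | R α ≤ θP} :=
      (isCompact_closedBall (0 : Fin n → ℝ) (θP / m)).of_isClosed_subset hBRclosed hBRsub
    -- the map F and set T
    set F : (Fin n → ℝ) → B × ℝ :=
      fun α => ((∑ i, α i • b i) - b0, ∑ i, α i * c i) with hFdef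
    have hFcont : Continuous F := by
      apply Continuous.prodMk
      · exact (continuous_finset_sum _ fun i _ =>
          (continuous_apply i).smul continuous_const).sub continuous_const
      · exact continuous_finset_sum _ fun i _ =>
          (continuous_apply i).mul continuous_const
    set T : Set (B × ℝ) := F '' {α : Fin n → ℝ | R α ≤ θP} with hTdef
    have hTcpt : IsCompact T := hBRcpt.image hFcont
    have hTconv : Convex ℝ T := by
      rintro _ ⟨α, hα, rfl⟩ _ ⟨β, hβ, rfl⟩ a d ha hd had
      refine ⟨a • α + d • β, ?_, ?_⟩
      · have h1 := hRtri (a • α) (d • β)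
        rw [hRsmul, hRsmul, abs_of_nonneg ha, abs_of_nonneg hd] at h1
        have hα' : R α ≤ θP := hα
        have hβ' : R β ≤ θP := hβ
        have : a * R α + d * R β ≤ (a + d) * θP := by
          nlinarith [mul_le_mul_of_nonneg_left hα' ha, mul_le_mul_of_nonneg_left hβ' hd]
        simp only [Set.mem_setOf_eq]
        rw [had, one_mul] at this
        linarith
      · have hb0' : a • b0 + d • b0 = b0 := by rw [← add_smul, had, one_smul]
        have hsum1 : ∑ i, (a • α + d • β) i • b i
            = a • (∑ i, α i • b i) + d • (∑ i, β i • b i) := by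
          rw [Finset.smul_sum, Finset.smul_sum, ← Finset.sum_add_distrib]
          refine Finset.sum_congr rfl fun i _ => ?_
          simp [add_smul, smul_smul]
        have hsum2 : ∑ i, (a • α + d • β) i * c i
            = a * (∑ i, α i * c i) + d * (∑ i, β i * c i) := by
          rw [Finset.mul_sum, Finset.mul_sum, ← Finset.sum_add_distrib]
          refine Finset.sum_congr rfl fun i _ => ?_
          simp [smul_eq_mul]; ring
        refine Prod.ext ?_ ?_
        · show (∑ i, (a • α + d • β) i • b i) - b0 = (a • F α + d • F β).1
          have hfst : (a • F α + d • F β).1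
              = a • ((∑ i, α i • b i) - b0) + d • ((∑ i, β i • b i) - b0) := rfl
          rw [hfst, smul_sub, smul_sub, hsum1]
          conv_lhs => rw [← hb0']
          abel
        · show (∑ i, (a • α + d • β) i * c i) = (a • F α + d • F β).2
          have hsnd : (a • F α + d • F β).2
              = a * (∑ i, α i * c i) + d * (∑ i, β i * c i) := rfl
          rw [hsnd, hsum2]
    -- the closed convex set to add
    set QK : Set (B × ℝ) := (-K) ×ˢ Set.Ici (0 : ℝ) with hQKdef
    have hQKclosed : IsClosed QK := (hKclosed.neg).prod isClosed_Ici
    have hQKconv : Convex ℝ QK := (hKconvex.neg).prod (convex_Ici 0)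
    set S : Set (B × ℝ) := T + QK with hSdef
    have hSclosed : IsClosed S := hQKclosed.add_left_of_isCompact hTcpt
    have hSconv : Convex ℝ S := hTconv.add hQKconv
    have hmemS : ∀ α : Fin n → ℝ, R α ≤ θP → ∀ k ∈ K, ∀ r : ℝ, 0 ≤ r →
        ((∑ i, α i • b i) - b0 - k, (∑ i, α i * c i) + r) ∈ S := by
      intro α hα k hk r hr
      have h1 : F α ∈ T := ⟨α, hα, rfl⟩
      have h2 : ((-k, r) : B × ℝ) ∈ QK := by
        refine Set.mem_prod.mpr ⟨?_, hr⟩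
        simpa using hk
      have := Set.add_mem_add h1 h2
      have heq : F α + ((-k, r) : B × ℝ)
          = ((∑ i, α i • b i) - b0 - k, (∑ i, α i * c i) + r) := by
        refine Prod.ext ?_ ?_
        · show (∑ i, α i • b i) - b0 + -k = (∑ i, α i • b i) - b0 - k
          abel
        · rfl
      rw [heq] at this
      rw [hSdef]
      exact this
    -- the point to separate
    have hpnotin : ((0 : B), Jn - ε) ∉ S := by
      intro hmem
      rw [hSdef] at hmem
      obtain ⟨x, hx, q, hq, hxq⟩ := Set.mem_add.mp hmem
      obtain ⟨α, hα, rfl⟩ := hx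
      rw [hQKdef, Set.mem_prod] at hq
      have hq1 : -q.1 ∈ K := by
        have := hq.1; rwa [Set.mem_neg] at this
      have hq2 : (0 : ℝ) ≤ q.2 := hq.2
      have he1 : (∑ i, α i • b i) - b0 + q.1 = 0 := congrArg Prod.fst hxq
      have he2 : (∑ i, α i * c i) + q.2 = Jn - ε := congrArg Prod.snd hxq
      have hfeasα : (∑ i, α i • b i) - b0 ∈ K := by
        have : (∑ i, α i • b i) - b0 = -q.1 := by
          rw [eq_neg_iff_add_eq_zero]; exact he1
        rw [this]; exact hq1
      have hJle : Jn ≤ ∑ i, α i * c i := by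
        rw [hJn]; exact csInf_le hPbdd ⟨α, hα, hfeasα, rfl⟩
      linarith
    -- separation
    obtain ⟨f, u, hfS, hfp⟩ := geometric_hahn_banach_closed_point hSconv hSclosed hpnotin
    set y : B →L[ℝ] ℝ := f.comp (ContinuousLinearMap.inl ℝ B ℝ) with hydef
    set lam : ℝ := f (0, 1) with hlamdef
    have hfdec : ∀ (x : B) (t : ℝ), f (x, t) = y x + t * lam := by
      intro x t
      have h : ((x, t) : B × ℝ) = ((x, 0) : B × ℝ) + t • ((0 : B), (1 : ℝ)) := by
        refine Prod.ext ?_ ?_ <;> simp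
      rw [h, map_add, map_smul, smul_eq_mul]
      rfl
    set k0 : B := (∑ i, α0 i • b i) - b0 with hk0def
    have hk0K : k0 ∈ K := hα0K
    have hineq : ∀ α : Fin n → ℝ, R α ≤ θP → ∀ k ∈ K, ∀ r : ℝ, 0 ≤ r →
        y ((∑ i, α i • b i) - b0 - k) + ((∑ i, α i * c i) + r) * lam < u := by
      intro α hα k hk r hr
      have := hfS _ (hmemS α hα k hk r hr)
      rwa [hfdec] at this
    set S0 : ℝ := ∑ i, α0 i * c i with hS0def
    have hbase : ∀ r : ℝ, 0 ≤ r → (S0 + r) * lam < u := by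
      intro r hr
      have := hineq α0 hα0R k0 hk0K r hr
      have hk0z : (∑ i, α0 i • b i) - b0 - k0 = 0 := by rw [hk0def]; abel
      rwa [hk0z, map_zero, zero_add] at this
    have hyK : ∀ k ∈ K, 0 ≤ y k := by
      intro k hk
      by_contra hneg
      push_neg at hneg
      have hA : 0 < u - S0 * lam := by
        have := hbase 0 le_rfl; rw [add_zero] at this; linarith
      set A : ℝ := u - S0 * lam with hAdef
      set t : ℝ := A / (-y k) with htdef
      have ht0 : 0 ≤ t := le_of_lt (div_pos hA (by linarith))
      have hkK' : k0 + t • k ∈ K := hKadd k0 hk0K _ (hKcone t ht0 k hk)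
      have := hineq α0 hα0R (k0 + t • k) hkK' 0 le_rfl
      rw [add_zero] at this
      have harg : (∑ i, α0 i • b i) - b0 - (k0 + t • k) = -(t • k) := by
        rw [hk0def]; abel
      rw [harg, map_neg, map_smul, smul_eq_mul] at this
      have hykne : y k ≠ 0 := ne_of_lt hneg
      have htk : t * y k = -A := by
        rw [htdef, div_mul_eq_mul_div, div_neg, mul_div_assoc, div_self hykne, mul_one]
      rw [htk] at this
      simp only [neg_neg] at this
      linarith
    have hlam_nonpos : lam ≤ 0 := by
      by_contra hpos
      push_neg at hpos
      have hA : 0 < u - S0 * lam := by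
        have := hbase 0 le_rfl; rw [add_zero] at this; linarith
      have := hbase ((u - S0 * lam) / lam) (le_of_lt (div_pos hA hpos))
      have hexp : (S0 + (u - S0 * lam) / lam) * lam = u := by field_simp; ring
      rw [hexp] at this
      exact lt_irrefl u this
    have hfp' : u < (Jn - ε) * lam := by
      have := hfp
      rw [hfdec, map_zero, zero_add] at this
      exact this
    have hlam_ne : lam ≠ 0 := by
      intro h0
      have h1 := hbase 0 le_rfl
      rw [h0, mul_zero] at h1
      rw [h0, mul_zero] at hfp'
      linarith
    have hμ : 0 < -lam := by
      rcases lt_or_eq_of_le hlam_nonpos with h | h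
      · linarith
      · exact absurd h hlam_ne
    set μ : ℝ := -lam with hμdef
    set z : B →L[ℝ] ℝ := μ⁻¹ • y with hzdef
    have hzK : ∀ v ∈ K, 0 ≤ z v := by
      intro v hv
      have : z v = μ⁻¹ * y v := rfl
      rw [this]
      exact mul_nonneg (le_of_lt (inv_pos.mpr hμ)) (hyK v hv)
    have hz2 : ∀ α : Fin n → ℝ, R α ≤ θP →
        ∑ i, α i * (z (b i) - c i) ≤ z b0 - (Jn - ε) := by
      intro α hα
      have h1 := hineq α hα 0 h0K 0 le_rfl
      rw [add_zero, sub_zero] at h1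
      have h2 : y ((∑ i, α i • b i) - b0) = (∑ i, α i * y (b i)) - y b0 := by
        rw [map_sub, map_sum]
        simp [smul_eq_mul]
      rw [h2] at h1
      have h3 : (∑ i, α i * y (b i)) - y b0 + (∑ i, α i * c i) * lam
          < (Jn - ε) * lam := lt_trans h1 hfp'
      set W : ℝ := ∑ i, α i * y (b i) with hWdef
      set V : ℝ := y b0 with hVdef
      set Sc : ℝ := ∑ i, α i * c i with hScdef
      have hlam : lam = -μ := by rw [hμdef]; ring
      rw [hlam] at h3
      -- h3 : W - V + Sc * (-μ) < (Jn - ε) * (-μ)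
      have hgoal_lhs : ∑ i, α i * (z (b i) - c i) = μ⁻¹ * W - Sc := by
        rw [hWdef, hScdef, Finset.mul_sum, ← Finset.sum_sub_distrib]
        refine Finset.sum_congr rfl fun i _ => ?_
        have : z (b i) = μ⁻¹ * y (b i) := rfl
        rw [this]; ring
      have hzb0 : z b0 = μ⁻¹ * V := rfl
      rw [hgoal_lhs, hzb0]
      have hinv : 0 < μ⁻¹ := inv_pos.mpr hμ
      have hcan : μ⁻¹ * μ = 1 := inv_mul_cancel₀ (ne_of_gt hμ)
      have h4 := mul_le_mul_of_nonneg_left (le_of_lt h3) (le_of_lt hinv)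
      have e1 : μ⁻¹ * (W - V + Sc * -μ) = μ⁻¹ * W - μ⁻¹ * V - Sc := by
        linear_combination (-Sc) * hcan
      have e2 : μ⁻¹ * ((Jn - ε) * -μ) = -(Jn - ε) := by
        linear_combination (-(Jn - ε)) * hcan
      rw [e1, e2] at h4
      linarith
    have hDle : θP * dualNormR R (fun i => z (b i) - c i) ≤ z b0 - (Jn - ε) :=
      dualNormR_le_of_forall hRsmul _ θP _ hθP hz2
    have hzQ : z b0 - θP * dualNormR R (fun i => z (b i) - c i) ∈ Q := ⟨z, hzK, rfl⟩
    have := le_csSup hQbdd hzQ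
    rw [← hJtn] at this
    linarith
  have hJJ : Jn = Jtn := le_antisymm hstrong hweak
  refine ⟨hJJ, ?_⟩
  intro γ hγ hγbd hθb ystar hystarK hopt
  have hden : 0 < γ * θP - ‖b0‖ := by linarith
  have hmain : ∀ JLB : ℝ, JLB ≤ Jn →
      ‖ystar‖ ≤ (θP * dualNormR R c - JLB) / (γ * θP - ‖b0‖) := by
    intro JLB hJLB
    set Dv : ℝ := dualNormR R (fun i => ystar (b i) - c i) with hDvdef
    set Dc : ℝ := dualNormR R c with hDcdef
    have h1 : γ * ‖ystar‖ ≤ dualNormR R (fun i => ystar (b i)) := hγbd ystar hystarK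
    have h2 : dualNormR R (fun i => ystar (b i)) ≤ Dv + Dc := by
      have hfe : (fun i => ystar (b i)) = (fun i => (ystar (b i) - c i) + c i) := by
        funext i; ring
      rw [hfe]
      exact dualNormR_add_le hRtri hRsmul hRdef _ _
    have h3 : ystar b0 ≤ ‖ystar‖ * ‖b0‖ := by
      have := ystar.le_opNorm b0
      have habs : ystar b0 ≤ ‖ystar b0‖ := le_abs_self _
      linarith
    have h4 : JLB ≤ ystar b0 - θP * Dv := by
      rw [hDvdef, hopt, ← hJJ]; exact hJLB
    rw [le_div_iff₀ hden]
    nlinarith [mul_le_mul_of_nonneg_left (by linarith : γ * ‖ystar‖ - Dc ≤ Dv) (le_of_lt hθP)]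
  refine ⟨hmain, ?_⟩
  have hlb : -(θP * dualNormR R c) ≤ Jn := by
    rw [hJn]
    exact le_csInf hPne fun s hs => hPlb s hs
  have := hmain _ hlb
  have heq : (θP * dualNormR R c - -(θP * dualNormR R c)) / (γ * θP - ‖b0‖)
      = 2 * θP * dualNormR R c / (γ * θP - ‖b0‖) := by ring_nf
  rw [heq] at this
  exact this
end

section
/- Suppose X is a real Hilbert space with norm induced by its inner product, {xᵢ}_{i∈ℕ} is an orthonormal family whose span is dense in X, the norm ‖·‖_R on ℝⁿ is the Euclidean norm, and θ_P ≥ ‖x*‖. Assume the primal problem Jₙ is feasible, and that there exists γ > 0 such that ‖(y(A x₁),…,y(A xₙ))‖₂ ≥ γ‖y‖_* for every y ∈ 𝕂* with γθ_P > ‖b‖. Then 0 ≤ Jₙ − J ≤ (‖c₀‖_{*n} + θ_D ‖A‖_n)·‖Π_{Xₙ⊥}(x*)‖, where Xₙ := span(x₁,…,xₙ), Xₙ⊥ is its orthogonal complement, Π_{Xₙ⊥} the orthogonal projection onto Xₙ⊥, the restricted norms are ‖c₀‖_{*n} := sup_{x ∈ Xₙ⊥} c₀(x)/‖x‖ and ‖A‖_n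 := sup_{x ∈ Xₙ⊥} ‖A x‖/‖x‖, and θ_D := 2θ_P‖c‖₂ / (γθ_P − ‖b‖). -/
open scoped RealInnerProductSpace

open scoped Pointwise

theorem slater_aux {B : Type*} [NormedAddCommGroup B] [NormedSpace ℝ B]
    {n : ℕ} (K : Set B) (hKclosed : IsClosed K) (hKconvex : Convex ℝ K)
    (hKcone : ∀ t : ℝ, 0 ≤ t → ∀ u ∈ K, t • u ∈ K) (h0K : (0 : B) ∈ K)
    (b0 : B) (v : Fin n → B) (γ θP : ℝ) (hγ : 0 < γ) (hθP0 : 0 < θP)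
    (hinfsup : ∀ y : B →L[ℝ] ℝ, (∀ u ∈ K, 0 ≤ y u) →
      γ * ‖y‖ ≤ Real.sqrt (∑ i : Fin n, (y (v i)) ^ 2))
    (hγθ : ‖b0‖ < γ * θP) (w : B) (hw : ‖w‖ ≤ γ * θP - ‖b0‖) :
    ∃ β : Fin n → ℝ,
      Real.sqrt (∑ i, (β i) ^ 2) ≤ θP ∧ (∑ i, β i • v i) - (b0 + w) ∈ K := by
  classical
  set L : EuclideanSpace ℝ (Fin n) → B := fun β => ∑ i, β i • v i with hL
  have hLcont : Continuous L := by
    apply continuous_finset_sum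
    intro i _
    exact ((EuclideanSpace.proj i).continuous).smul continuous_const
  set Q : Set B := L '' Metric.closedBall 0 θP with hQ
  have hQcomp : IsCompact Q := (isCompact_closedBall 0 θP).image hLcont
  have hQconv : Convex ℝ Q := by
    rintro q1 ⟨β1, hβ1, rfl⟩ q2 ⟨β2, hβ2, rfl⟩ a b ha hb hab
    refine ⟨a • β1 + b • β2, convex_closedBall 0 θP hβ1 hβ2 ha hb hab, ?_⟩
    simp only [hL]
    rw [Finset.smul_sum, Finset.smul_sum, ← Finset.sum_add_distrib]
    refine Finset.sum_congr rfl fun i _ => ?_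
    simp [add_smul, smul_smul, PiLp.add_apply, PiLp.smul_apply, smul_eq_mul]
  set D : Set B := Q + (-K) with hD
  have hDclosed : IsClosed D := (hKclosed.neg).add_left_of_isCompact hQcomp
  have hDconv : Convex ℝ D := hQconv.add (hKconvex.neg)
  have h0Q : (0 : B) ∈ Q := ⟨0, by simpa using hθP0.le, by simp [hL]⟩
  by_cases hbD : b0 + w ∈ D
  · obtain ⟨q, hq, m, hm, hqm⟩ := Set.mem_add.mp hbD
    obtain ⟨β, hβball, rfl⟩ := hq
    refine ⟨β, ?_, ?_⟩
    · have hβn : ‖β‖ ≤ θP := by simpa using mem_closedBall_zero_iff.mp hβball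
      rw [EuclideanSpace.norm_eq] at hβn
      simpa [Real.norm_eq_abs, sq_abs] using hβn
    · have hmK : -m ∈ K := Set.mem_neg.mp hm
      have heq : (∑ i, β i • v i) - (b0 + w) = -m := by
        rw [← hqm]; show L β - (L β + m) = -m; abel
      rw [heq]; exact hmK
  · exfalso
    obtain ⟨f, u, hfx, hfd⟩ := geometric_hahn_banach_point_closed hDconv hDclosed hbD
    have h0D : (0 : B) ∈ D := by
      have := Set.add_mem_add h0Q (Set.neg_mem_neg.mpr h0K)
      simpa using this
    have hyK : ∀ z ∈ K, 0 ≤ (-f) z := by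
      intro z hz
      by_contra hneg
      push_neg at hneg
      have hfv : 0 < f z := by
        simp only [ContinuousLinearMap.neg_apply] at hneg
        linarith
      set t : ℝ := (|u| + 1) / f z with ht
      have htpos : 0 ≤ t := by positivity
      have htv : t • z ∈ K := hKcone t htpos z hz
      have hd : (0 : B) + -(t • z) ∈ D := Set.add_mem_add h0Q (Set.neg_mem_neg.mpr htv)
      have h3 := hfd _ hd
      rw [zero_add, map_neg, map_smul] at h3
      have h4 : t * f z = |u| + 1 := by rw [ht]; field_simp
      have h5 : t • f z = t * f z := rfl
      rw [h5, h4] at h3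
      have := neg_abs_le u
      linarith
    have hinf := hinfsup (-f) hyK
    have hf0 : f ≠ 0 := by
      intro h
      rw [h] at hfx hfd
      have h1 := hfd 0 h0D
      simp at hfx h1
      linarith
    have hfnorm : 0 < ‖(-f : B →L[ℝ] ℝ)‖ := by
      rw [norm_neg]; exact norm_pos_iff.mpr hf0
    set r := Real.sqrt (∑ i : Fin n, ((-f : B →L[ℝ] ℝ) (v i)) ^ 2) with hr
    have hrpos : 0 < r := lt_of_lt_of_le (by positivity) hinf
    have hr2 : ∑ i : Fin n, ((-f : B →L[ℝ] ℝ) (v i)) ^ 2 = r ^ 2 := by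
      rw [hr, Real.sq_sqrt]
      positivity
    set β : EuclideanSpace ℝ (Fin n) := WithLp.toLp 2 (fun i => (θP / r) * ((-f : B →L[ℝ] ℝ) (v i))) with hβ
    have hβnorm : ‖β‖ = θP := by
      rw [EuclideanSpace.norm_eq]
      have hh : ∀ i : Fin n, ‖β i‖ ^ 2 = (θP / r) ^ 2 * ((-f : B →L[ℝ] ℝ) (v i)) ^ 2 := by
        intro i
        rw [Real.norm_eq_abs, sq_abs, hβ]
        ring
      rw [Finset.sum_congr rfl fun i _ => hh i, ← Finset.mul_sum, hr2]
      rw [show (θP / r) ^ 2 * r ^ 2 = θP ^ 2 by field_simp]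
      exact Real.sqrt_sq hθP0.le
    have hβQ : L β ∈ Q := ⟨β, by simp [hβnorm], rfl⟩
    have hβD : L β ∈ D := by
      have := Set.add_mem_add hβQ (Set.neg_mem_neg.mpr h0K)
      simpa using this
    have hval : f (L β) = -(θP * r) := by
      have h1 : f (L β) = ∑ i, β i * f (v i) := by
        rw [hL]; simp only [map_sum, map_smul, smul_eq_mul]
      rw [h1]
      have h2 : ∀ i : Fin n, β i * f (v i) = -((θP / r) * ((-f : B →L[ℝ] ℝ) (v i)) ^ 2) := by
        intro i
        simp only [hβ, ContinuousLinearMap.neg_apply]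
        ring
      rw [Finset.sum_congr rfl fun i _ => h2 i, Finset.sum_neg_distrib, ← Finset.mul_sum, hr2]
      field_simp
    have hchain1 := hfd _ hβD
    rw [hval] at hchain1
    have hb0w : ‖b0 + w‖ ≤ γ * θP := by
      calc ‖b0 + w‖ ≤ ‖b0‖ + ‖w‖ := norm_add_le _ _
      _ ≤ γ * θP := by linarith
    have hflb : -(θP * r) ≤ f (b0 + w) := by
      have h1 : |f (b0 + w)| ≤ ‖f‖ * ‖b0 + w‖ := by
        simpa [Real.norm_eq_abs] using f.le_opNorm (b0 + w)
      have h2 : ‖f‖ * ‖b0 + w‖ ≤ ‖f‖ * (γ * θP) :=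
        mul_le_mul_of_nonneg_left hb0w (norm_nonneg f)
      have h3 : γ * ‖f‖ ≤ r := by rwa [norm_neg] at hinf
      have h4 : ‖f‖ * (γ * θP) ≤ θP * r := by nlinarith [norm_nonneg f]
      have := neg_abs_le (f (b0 + w))
      linarith
    linarith


theorem stmt2
    {X : Type*} [NormedAddCommGroup X] [InnerProductSpace ℝ X] [CompleteSpace X]
    {B : Type*} [NormedAddCommGroup B] [NormedSpace ℝ B]
    (c0 : X →L[ℝ] ℝ) (A : X →L[ℝ] B)
    (K : Set B) (hKclosed : IsClosed K) (hKconvex : Convex ℝ K)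
    (hKcone : ∀ t : ℝ, 0 ≤ t → ∀ v ∈ K, t • v ∈ K)
    (b0 : B)
    -- the infinite LP attains a minimizer x*
    (xstar : X) (hxfeas : A xstar - b0 ∈ K)
    (hxmin : ∀ x : X, A x - b0 ∈ K → c0 xstar ≤ c0 x)
    (J : ℝ) (hJ : J = c0 xstar)
    -- an orthonormal family with dense span
    (x : ℕ → X) (honb : Orthonormal ℝ x)
    (hdense : (Submodule.span ℝ (Set.range x)).topologicalClosure = ⊤)
    (n : ℕ) (θP : ℝ) (hθP : ‖xstar‖ ≤ θP)
    -- the semi-infinite primal value with Euclidean norm constraint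
    (Jn : ℝ)
    (hJn : Jn = sInf {t | ∃ α : Fin n → ℝ,
      Real.sqrt (∑ i, (α i) ^ 2) ≤ θP ∧ (∑ i, α i • A (x i)) - b0 ∈ K ∧
        t = ∑ i, α i * c0 (x i)})
    (hfeas : ∃ α : Fin n → ℝ,
      Real.sqrt (∑ i, (α i) ^ 2) ≤ θP ∧ (∑ i, α i • A (x i)) - b0 ∈ K)
    -- the inf-sup regularity condition
    (γ : ℝ) (hγ : 0 < γ)
    (hinfsup : ∀ y : B →L[ℝ] ℝ, (∀ v ∈ K, 0 ≤ y v) →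
      γ * ‖y‖ ≤ Real.sqrt (∑ i : Fin n, (y (A (x i))) ^ 2))
    (hγθ : ‖b0‖ < γ * θP)
    -- orthogonal projection of x* onto the orthogonal complement of Xₙ
    (pxo : X)
    (hpxo_mem : pxo ∈ (Submodule.span ℝ (Set.range fun i : Fin n => x i))ᗮ)
    (hpxo_orth : ∀ w ∈ (Submodule.span ℝ (Set.range fun i : Fin n => x i))ᗮ,
      ⟪xstar - pxo, w⟫ = 0) :
    0 ≤ Jn - J ∧
      Jn - J ≤
        (sSup {t | ∃ v ∈ (Submodule.span ℝ (Set.range fun i : Fin n => x i))ᗮ,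
            t = c0 v / ‖v‖} +
          (2 * θP * Real.sqrt (∑ i : Fin n, (c0 (x i)) ^ 2) / (γ * θP - ‖b0‖)) *
            sSup {t | ∃ v ∈ (Submodule.span ℝ (Set.range fun i : Fin n => x i))ᗮ,
              t = ‖A v‖ / ‖v‖}) * ‖pxo‖ := by
  classical
  have hθP0 : 0 < θP := by nlinarith [norm_nonneg b0]
  have h0K : (0 : B) ∈ K := by simpa using hKcone 0 le_rfl _ hxfeas
  set S : Submodule ℝ X := Submodule.span ℝ (Set.range fun i : Fin n => x i) with hSdef
  haveI hfdS : FiniteDimensional ℝ S := by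
    rw [hSdef]; exact FiniteDimensional.span_of_finite ℝ (Set.finite_range _)
  clear_value S
  set T : Set ℝ := {t | ∃ α : Fin n → ℝ,
      Real.sqrt (∑ i, (α i) ^ 2) ≤ θP ∧ (∑ i, α i • A (x i)) - b0 ∈ K ∧
        t = ∑ i, α i * c0 (x i)} with hTdef
  clear_value T
  -- basic facts on T
  have hlb : ∀ t ∈ T, J ≤ t := by
    rw [hTdef]
    rintro t ⟨α, hα1, hα2, rfl⟩
    have h1 : (∑ i, α i • A (x i)) = A (∑ i, α i • x i) := by
      rw [map_sum]; simp [map_smul]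
    have h2 : c0 (∑ i, α i • x i) = ∑ i, α i * c0 (x i) := by
      rw [map_sum]; simp [map_smul, smul_eq_mul]
    rw [hJ, ← h2]
    exact hxmin _ (by rwa [← h1])
  have hTne : T.Nonempty := by
    obtain ⟨α, h1, h2⟩ := hfeas
    refine ⟨∑ i, α i * c0 (x i), ?_⟩
    rw [hTdef]
    exact ⟨α, h1, h2, rfl⟩
  have hTbdd : BddBelow T := ⟨J, hlb⟩
  have hJnJ : J ≤ Jn := by rw [hJn]; exact le_csInf hTne hlb
  refine ⟨by linarith, ?_⟩
  -- the projection onto the span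
  have honb' : Orthonormal ℝ (fun i : Fin n => x i) := honb.comp _ Fin.val_injective
  have hpS : xstar - pxo ∈ S := by
    have h : xstar - pxo ∈ Sᗮᗮ := by
      rw [Submodule.mem_orthogonal]
      intro u hu
      rw [real_inner_comm]
      exact hpxo_orth u hu
    rwa [Submodule.orthogonal_orthogonal] at h
  rw [hSdef] at hpS
  obtain ⟨α, hα⟩ := (Submodule.mem_span_range_iff_exists_fun ℝ).mp hpS
  have hαnorm : Real.sqrt (∑ i, (α i) ^ 2) = ‖xstar - pxo‖ := by
    have h1 : (⟪∑ i, α i • x i, ∑ i, α i • x i⟫ : ℝ) = ∑ i, α i * α i := by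
      simpa using honb'.inner_sum α α Finset.univ
    rw [hα, real_inner_self_eq_norm_sq] at h1
    rw [show (∑ i, (α i) ^ 2) = ∑ i, α i * α i by simp [sq], ← h1,
      Real.sqrt_sq (norm_nonneg _)]
  have hperp : (⟪xstar - pxo, pxo⟫ : ℝ) = 0 := hpxo_orth pxo hpxo_mem
  have hpnorm : ‖xstar - pxo‖ ≤ θP := by
    have h2 := norm_add_sq_real (xstar - pxo) pxo
    rw [sub_add_cancel, hperp] at h2
    nlinarith [norm_nonneg (xstar - pxo), norm_nonneg xstar, norm_nonneg pxo]
  -- the sSup quantities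
  set Nc := sSup {t | ∃ v ∈ Sᗮ, t = c0 v / ‖v‖} with hNcdef
  clear_value Nc
  set NA := sSup {t | ∃ v ∈ Sᗮ, t = ‖A v‖ / ‖v‖} with hNAdef
  clear_value NA
  have hbdd_c : ∀ t ∈ {t | ∃ v ∈ Sᗮ, t = c0 v / ‖v‖}, t ≤ ‖c0‖ := by
    rintro t ⟨v, hv, rfl⟩
    rcases eq_or_ne v 0 with rfl | hv0
    · simp [norm_nonneg]
    · rw [div_le_iff₀ (norm_pos_iff.mpr hv0)]
      exact (le_abs_self _).trans (by simpa [Real.norm_eq_abs] using c0.le_opNorm v)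
  have hbdd_A : ∀ t ∈ {t | ∃ v ∈ Sᗮ, t = ‖A v‖ / ‖v‖}, t ≤ ‖A‖ := by
    rintro t ⟨v, hv, rfl⟩
    rcases eq_or_ne v 0 with rfl | hv0
    · simp [norm_nonneg]
    · rw [div_le_iff₀ (norm_pos_iff.mpr hv0)]
      exact A.le_opNorm v
  have hNc0 : 0 ≤ Nc := by
    rw [hNcdef]; exact le_csSup ⟨‖c0‖, hbdd_c⟩ ⟨0, Submodule.zero_mem _, by simp⟩
  have hNA0 : 0 ≤ NA := by
    rw [hNAdef]; exact le_csSup ⟨‖A‖, hbdd_A⟩ ⟨0, Submodule.zero_mem _, by simp⟩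
  set δ := γ * θP - ‖b0‖ with hδdef
  clear_value δ
  have hδpos : 0 < δ := by rw [hδdef]; linarith
  -- representation identities
  have hαA : (∑ i, α i • A (x i)) = A xstar - A pxo := by
    have h1 : (∑ i, α i • A (x i)) = A (∑ i, α i • x i) := by
      rw [map_sum]; simp [map_smul]
    rw [h1, hα, map_sub]
  have hαc : (∑ i, α i * c0 (x i)) = J - c0 pxo := by
    have h2 : c0 (∑ i, α i • x i) = ∑ i, α i * c0 (x i) := by
      rw [map_sum]; simp [map_smul, smul_eq_mul]
    rw [← h2, hα, map_sub, hJ]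
  set cn := Real.sqrt (∑ i : Fin n, (c0 (x i)) ^ 2) with hcndef
  clear_value cn
  have hcn0 : 0 ≤ cn := by rw [hcndef]; exact Real.sqrt_nonneg _
  rcases eq_or_ne pxo 0 with hpxo0 | hpxo0
  · -- pxo = 0 : the projection equals x*, already feasible
    subst hpxo0
    have hfeas0 : (∑ i, α i • A (x i)) - b0 ∈ K := by
      rw [hαA]; simpa using hxfeas
    have hmem : (∑ i, α i * c0 (x i)) ∈ T := by
      rw [hTdef]
      exact ⟨α, by rw [hαnorm]; simpa using hpnorm, hfeas0, rfl⟩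
    have hJnle : Jn ≤ ∑ i, α i * c0 (x i) := by rw [hJn]; exact csInf_le hTbdd hmem
    rw [hαc] at hJnle
    simp only [map_zero, norm_zero, mul_zero]
    simp only [map_zero] at hJnle
    linarith
  · have hpxo_pos : 0 < ‖pxo‖ := norm_pos_iff.mpr hpxo0
    have hNcb : -(c0 pxo) ≤ Nc * ‖pxo‖ := by
      have h1 : c0 (-pxo) / ‖-pxo‖ ≤ Nc := by
        rw [hNcdef]
        exact le_csSup ⟨‖c0‖, hbdd_c⟩ ⟨-pxo, Submodule.neg_mem _ hpxo_mem, rfl⟩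
      rw [norm_neg, div_le_iff₀ hpxo_pos, map_neg] at h1
      linarith
    have hNAb : ‖A pxo‖ ≤ NA * ‖pxo‖ := by
      have h2 : ‖A pxo‖ / ‖pxo‖ ≤ NA := by
        rw [hNAdef]
        exact le_csSup ⟨‖A‖, hbdd_A⟩ ⟨pxo, hpxo_mem, rfl⟩
      rw [div_le_iff₀ hpxo_pos] at h2
      linarith
    rcases eq_or_lt_of_le (norm_nonneg (A pxo)) with hε0 | hεpos
    · -- A pxo = 0 : projection already feasible
      have hApxo : A pxo = 0 := by rw [← norm_eq_zero]; exact hε0.symm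
      have hfeas0 : (∑ i, α i • A (x i)) - b0 ∈ K := by
        rw [hαA, hApxo]; simpa using hxfeas
      have hmem : (∑ i, α i * c0 (x i)) ∈ T := by
        rw [hTdef]
        exact ⟨α, by rw [hαnorm]; exact hpnorm, hfeas0, rfl⟩
      have hJnle : Jn ≤ ∑ i, α i * c0 (x i) := by rw [hJn]; exact csInf_le hTbdd hmem
      rw [hαc] at hJnle
      have hθD0 : 0 ≤ 2 * θP * cn / δ := by positivity
      nlinarith [mul_nonneg (mul_nonneg hθD0 hNA0) hpxo_pos.le]
    · -- main case
      set ε := ‖A pxo‖ with hεdef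
      clear_value ε
      set w : B := (δ / ε) • (A pxo) with hwdef
      clear_value w
      have hwnorm : ‖w‖ = δ := by
        rw [hwdef, norm_smul, Real.norm_eq_abs,
          abs_of_nonneg (div_nonneg hδpos.le hεpos.le), ← hεdef,
          div_mul_cancel₀ _ (ne_of_gt hεpos)]
      obtain ⟨β, hβ1, hβ2⟩ := slater_aux K hKclosed hKconvex hKcone h0K b0
        (fun i => A (x i)) γ θP hγ hθP0 hinfsup hγθ w (by rw [hwnorm, hδdef])
      set lam := ε / (ε + δ) with hlamdef
      clear_value lam
      have hεδ : 0 < ε + δ := by linarith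
      have hlam0 : 0 ≤ lam := by rw [hlamdef]; exact div_nonneg hεpos.le hεδ.le
      have hlam1 : lam ≤ 1 := by
        rw [hlamdef, div_le_one hεδ]; linarith
      have h1lam : (0:ℝ) ≤ 1 - lam := by linarith
      set α' : Fin n → ℝ := fun i => (1 - lam) * α i + lam * β i with hα'def
      clear_value α'
      have hsum : (∑ i, α' i • A (x i))
          = (1 - lam) • (∑ i, α i • A (x i)) + lam • (∑ i, β i • A (x i)) := by
        rw [Finset.smul_sum, Finset.smul_sum, ← Finset.sum_add_distrib]
        refine Finset.sum_congr rfl fun i _ => ?_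
        simp only [hα'def, add_smul, smul_smul]
      have hfeas' : (∑ i, α' i • A (x i)) - b0
          = (1 - lam) • (A xstar - b0) + lam • ((∑ i, β i • A (x i)) - (b0 + w)) := by
        rw [hsum, hαA, hwdef]
        match_scalars
        · ring
        · rw [hlamdef]; field_simp; ring
        · ring
        · ring
      have hfeasmem : (∑ i, α' i • A (x i)) - b0 ∈ K := by
        rw [hfeas']
        exact hKconvex hxfeas hβ2 h1lam hlam0 (by ring)
      -- norm bound for α'
      have heuc : ∀ g : Fin n → ℝ,
          Real.sqrt (∑ i, (g i) ^ 2) = ‖(WithLp.equiv 2 (Fin n → ℝ)).symm g‖ := by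
        intro g
        rw [EuclideanSpace.norm_eq]
        simp [Real.norm_eq_abs, sq_abs]
      have hα'norm : Real.sqrt (∑ i, (α' i) ^ 2) ≤ θP := by
        rw [heuc]
        have hdecomp : (WithLp.equiv 2 (Fin n → ℝ)).symm α'
            = (1 - lam) • (WithLp.equiv 2 (Fin n → ℝ)).symm α
              + lam • (WithLp.equiv 2 (Fin n → ℝ)).symm β := by
          ext i
          simp [hα'def]
        rw [hdecomp]
        have e1 : ‖(WithLp.equiv 2 (Fin n → ℝ)).symm α‖ ≤ θP := by
          rw [← heuc, hαnorm]; exact hpnorm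
        have e2 : ‖(WithLp.equiv 2 (Fin n → ℝ)).symm β‖ ≤ θP := by
          rw [← heuc]; exact hβ1
        calc ‖(1 - lam) • (WithLp.equiv 2 (Fin n → ℝ)).symm α
              + lam • (WithLp.equiv 2 (Fin n → ℝ)).symm β‖
            ≤ ‖(1 - lam) • (WithLp.equiv 2 (Fin n → ℝ)).symm α‖
              + ‖lam • (WithLp.equiv 2 (Fin n → ℝ)).symm β‖ := norm_add_le _ _
        _ = (1 - lam) * ‖(WithLp.equiv 2 (Fin n → ℝ)).symm α‖
              + lam * ‖(WithLp.equiv 2 (Fin n → ℝ)).symm β‖ := by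
            rw [norm_smul, norm_smul, Real.norm_eq_abs, Real.norm_eq_abs,
              abs_of_nonneg h1lam, abs_of_nonneg hlam0]
        _ ≤ (1 - lam) * θP + lam * θP := by
            have := mul_le_mul_of_nonneg_left e1 h1lam
            have := mul_le_mul_of_nonneg_left e2 hlam0
            linarith
        _ = θP := by ring
      -- value bounds
      have hCSβ : (∑ i, β i * c0 (x i)) ≤ θP * cn := by
        calc (∑ i, β i * c0 (x i))
            ≤ Real.sqrt (∑ i, (β i) ^ 2) * Real.sqrt (∑ i : Fin n, (c0 (x i)) ^ 2) :=
              Real.sum_mul_le_sqrt_mul_sqrt _ _ _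
        _ ≤ θP * cn := by
            rw [← hcndef]
            exact mul_le_mul_of_nonneg_right hβ1 hcn0
      have hCSα : -(θP * cn) ≤ ∑ i, α i * c0 (x i) := by
        have h := Real.sum_mul_le_sqrt_mul_sqrt (Finset.univ : Finset (Fin n))
          (fun i => -(α i)) (fun i => c0 (x i))
        simp only [neg_mul, Finset.sum_neg_distrib, neg_sq] at h
        rw [← hcndef, hαnorm] at h
        have h5 : ‖xstar - pxo‖ * cn ≤ θP * cn := mul_le_mul_of_nonneg_right hpnorm hcn0
        linarith
      have hval' : (∑ i, α' i * c0 (x i))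
          = (1 - lam) * (∑ i, α i * c0 (x i)) + lam * (∑ i, β i * c0 (x i)) := by
        rw [Finset.mul_sum, Finset.mul_sum, ← Finset.sum_add_distrib]
        refine Finset.sum_congr rfl fun i _ => ?_
        simp only [hα'def]; ring
      have hmem : (∑ i, α' i * c0 (x i)) ∈ T := by
        rw [hTdef]
        exact ⟨α', hα'norm, hfeasmem, rfl⟩
      have hJnle : Jn ≤ ∑ i, α' i * c0 (x i) := by rw [hJn]; exact csInf_le hTbdd hmem
      -- combine
      have hlamle : lam ≤ ε / δ := by
        rw [hlamdef, div_le_div_iff₀ hεδ hδpos]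
        exact mul_le_mul_of_nonneg_left (le_add_of_nonneg_left hεpos.le) hεpos.le
      have htpcn : (0:ℝ) ≤ 2 * θP * cn :=
        mul_nonneg (mul_nonneg (by norm_num) hθP0.le) hcn0
      have hθD0 : (0:ℝ) ≤ 2 * θP * cn / δ := div_nonneg htpcn hδpos.le
      have hbound : (∑ i, α' i * c0 (x i))
          ≤ J + (Nc + (2 * θP * cn / δ) * NA) * ‖pxo‖ := by
        rw [hval', hαc]
        have key : lam * (∑ i, β i * c0 (x i))
            ≤ lam * (J - c0 pxo) + lam * (2 * θP * cn) := by
          have h1 : (∑ i, β i * c0 (x i)) - (J - c0 pxo) ≤ 2 * θP * cn := by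
            rw [← hαc]; linarith only [hCSβ, hCSα, hαc]
          have hm := mul_le_mul_of_nonneg_left h1 hlam0
          rw [mul_sub] at hm
          linarith only [hm]
        have key2 : lam * (2 * θP * cn) ≤ (2 * θP * cn / δ) * (NA * ‖pxo‖) := by
          have h2 : lam * (2 * θP * cn) ≤ (ε / δ) * (2 * θP * cn) :=
            mul_le_mul_of_nonneg_right hlamle htpcn
          have he : (ε / δ) * (2 * θP * cn) = (2 * θP * cn / δ) * ε := by ring
          have hεb : ε ≤ NA * ‖pxo‖ := hNAb
          have h3 := mul_le_mul_of_nonneg_left hεb hθD0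
          linarith only [h2, he, h3]
        linarith only [key, key2, hNcb]
      linarith only [hJnle, hbound, hJnJ]
end

section
/- Let K = [0,1]^m, let g : K → ℝ be Lipschitz continuous with constant L_g > 0 with respect to the ℓ∞-norm on K, and let g_max := max_{k ∈ K} g(k). Then for every η > 0, ∫_K exp( (g(k) − g_max)/η ) dk ≥ min{ (mη/L_g)^m , 1 } · exp( −min{ m , L_g/η } ), where the integral is with respect to the Lebesgue measure on K. -/
open MeasureTheory Set

theorem stmt5 (m : ℕ) (Lg : ℝ) (hLg : 0 < Lg) (g : (Fin m → ℝ) → ℝ)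
    (hLip : ∀ x ∈ Set.Icc (0 : Fin m → ℝ) 1, ∀ y ∈ Set.Icc (0 : Fin m → ℝ) 1,
      |g x - g y| ≤ Lg * ‖x - y‖)
    (gmax : ℝ)
    (hattain : ∃ k ∈ Set.Icc (0 : Fin m → ℝ) 1, g k = gmax)
    (hub : ∀ k ∈ Set.Icc (0 : Fin m → ℝ) 1, g k ≤ gmax)
    (η : ℝ) (hη : 0 < η) :
    min (((m : ℝ) * η / Lg) ^ m) 1 * Real.exp (-min (m : ℝ) (Lg / η)) ≤
      ∫ k in Set.Icc (0 : Fin m → ℝ) 1, Real.exp ((g k - gmax) / η) := by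
  obtain ⟨k₀, hk₀, hgk₀⟩ := hattain
  set r : ℝ := min ((m : ℝ) * η / Lg) 1 with hrdef
  have hx0 : (0:ℝ) ≤ (m : ℝ) * η / Lg := by positivity
  have hr0 : 0 ≤ r := le_min hx0 one_pos.le
  have hr1 : r ≤ 1 := min_le_right _ _
  set a : Fin m → ℝ := fun i => min (k₀ i) (1 - r) with ha
  set b : Fin m → ℝ := fun i => a i + r with hb
  have hab : a ≤ b := fun i => by simp [hb]; linarith
  have hS : Set.Icc a b ⊆ Set.Icc (0 : Fin m → ℝ) 1 := by
    intro k hk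
    constructor
    · intro i
      have h1 : a i ≤ k i := hk.1 i
      have h2 : (0:ℝ) ≤ a i := le_min (hk₀.1 i) (by linarith)
      simpa using le_trans h2 h1
    · intro i
      have h1 : k i ≤ b i := hk.2 i
      have h2 : b i ≤ 1 := by
        have : a i ≤ 1 - r := min_le_right _ _
        simp [hb]; linarith
      simpa using le_trans h1 h2
  have hk₀S : k₀ ∈ Set.Icc a b := by
    constructor
    · intro i; exact min_le_left _ _
    · intro i
      rcases le_total (k₀ i) (1 - r) with h | h
      · simp [hb, ha, min_eq_left h]; linarith
      · simp only [hb, ha, min_eq_right h]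
        have := hk₀.2 i
        simp at this
        linarith
  -- lower bound on integrand on S
  have hlow : ∀ k ∈ Set.Icc a b, Real.exp (-(Lg * r / η)) ≤ Real.exp ((g k - gmax) / η) := by
    intro k hk
    apply Real.exp_le_exp.2
    have hnorm : ‖k - k₀‖ ≤ r := by
      apply pi_norm_le_iff_of_nonneg hr0 |>.2
      intro i
      rw [Pi.sub_apply, Real.norm_eq_abs, abs_sub_le_iff]
      have h1 := hk.1 i; have h2 := hk.2 i
      have h3 := hk₀S.1 i; have h4 := hk₀S.2 i
      simp only [hb] at h2 h4
      constructor <;> linarith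
    have hg : |g k - g k₀| ≤ Lg * ‖k - k₀‖ := hLip k (hS hk) k₀ hk₀
    have : gmax - g k ≤ Lg * r := by
      have h5 : Lg * ‖k - k₀‖ ≤ Lg * r := by nlinarith
      have := abs_le.1 hg
      rw [hgk₀] at this
      linarith [this.2]
    rw [← neg_div, div_le_div_iff_of_pos_right hη]
    linarith
  -- continuity / integrability
  have hcont : ContinuousOn g (Set.Icc (0 : Fin m → ℝ) 1) := by
    have : LipschitzOnWith (Real.toNNReal Lg) g (Set.Icc (0 : Fin m → ℝ) 1) := by
      rw [lipschitzOnWith_iff_dist_le_mul]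
      intro x hx y hy
      rw [Real.dist_eq, dist_eq_norm]
      calc |g x - g y| ≤ Lg * ‖x - y‖ := hLip x hx y hy
        _ = (Real.toNNReal Lg : ℝ) * ‖x - y‖ := by rw [Real.coe_toNNReal _ hLg.le]
    exact this.continuousOn
  have hfcont : ContinuousOn (fun k => Real.exp ((g k - gmax) / η)) (Set.Icc (0 : Fin m → ℝ) 1) :=
    Real.continuous_exp.comp_continuousOn ((hcont.sub continuousOn_const).div_const η)
  have hint : IntegrableOn (fun k => Real.exp ((g k - gmax) / η)) (Set.Icc (0 : Fin m → ℝ) 1) :=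
    hfcont.integrableOn_compact isCompact_Icc
  have hintS : IntegrableOn (fun k => Real.exp ((g k - gmax) / η)) (Set.Icc a b) :=
    hint.mono_set hS
  -- volume of S
  have hvol : (volume (Set.Icc a b)).toReal = r ^ m := by
    rw [Real.volume_Icc_pi_toReal hab]
    simp [hb]
  have step1 : Real.exp (-(Lg * r / η)) * r ^ m ≤ ∫ k in Set.Icc a b, Real.exp ((g k - gmax) / η) := by
    rw [← hvol]
    exact setIntegral_ge_of_const_le_real measurableSet_Icc
      isCompact_Icc.measure_lt_top.ne hlow hintS
  have step2 : (∫ k in Set.Icc a b, Real.exp ((g k - gmax) / η)) ≤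
      ∫ k in Set.Icc (0 : Fin m → ℝ) 1, Real.exp ((g k - gmax) / η) := by
    apply setIntegral_mono_set hint
    · filter_upwards with k using (Real.exp_pos _).le
    · exact HasSubset.Subset.eventuallyLE hS
  -- identify constants
  have hmin1 : min (((m : ℝ) * η / Lg) ^ m) 1 = r ^ m := by
    rcases le_total ((m : ℝ) * η / Lg) 1 with h | h
    · rw [hrdef, min_eq_left h, min_eq_left (pow_le_one₀ hx0 h)]
    · rw [hrdef, min_eq_right h, one_pow, min_eq_right (one_le_pow₀ h)]
  have hmin2 : min (m : ℝ) (Lg / η) = Lg * r / η := by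
    rcases le_total ((m : ℝ) * η / Lg) 1 with h | h
    · rw [hrdef, min_eq_left h, min_eq_left]
      · field_simp
      · rw [div_le_one hLg] at h
        rw [le_div_iff₀ hη]
        linarith
    · rw [hrdef, min_eq_right h]
      rw [min_eq_right]
      · ring
      · rw [one_le_div hLg] at h
        rw [div_le_iff₀ hη]
        linarith
  rw [hmin1, hmin2, mul_comm]
  exact le_trans step1 step2
end

section
/- Let K = [0,1]^m with Lebesgue (uniform) measure λ, let g : K → ℝ be Lipschitz continuous with constant L_g > 0 with respect to the ℓ∞-norm, and let η > 0. Let y be the Gibbs probability measure on K with density dy/dλ = exp(g/η) / ∫_K exp(g(k)/η) dk. Then the relative entropy of y with respect to λ satisfies KL(y‖λ) := ∫_K ln(dy/dλ) dy ≤ m · max{ ln( (e·L_g / m) · η⁻¹ ), 1 }. -/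
open MeasureTheory Set

theorem stmt6 (m : ℕ) (Lg : ℝ) (hLg : 0 < Lg) (g : (Fin m → ℝ) → ℝ)
    (hLip : ∀ x ∈ Set.Icc (0 : Fin m → ℝ) 1, ∀ y ∈ Set.Icc (0 : Fin m → ℝ) 1,
      |g x - g y| ≤ Lg * ‖x - y‖)
    (η : ℝ) (hη : 0 < η)
    (Z : ℝ) (hZ : Z = ∫ k in Set.Icc (0 : Fin m → ℝ) 1, Real.exp (g k / η))
    (ρ : (Fin m → ℝ) → ℝ) (hρ : ∀ k, ρ k = Real.exp (g k / η) / Z) :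
    (∫ k in Set.Icc (0 : Fin m → ℝ) 1, Real.log (ρ k) * ρ k) ≤
      (m : ℝ) * max (Real.log ((Real.exp 1 * Lg / m) * η⁻¹)) 1 := by
  set s : Set (Fin m → ℝ) := Set.Icc 0 1 with hs
  have hsmeas : MeasurableSet s := measurableSet_Icc
  have hscomp : IsCompact s := isCompact_Icc
  by_cases hm : m = 0
  · -- degenerate case: single point space
    subst hm
    have hsub : Subsingleton (Fin 0 → ℝ) := ⟨fun a b => funext fun i => i.elim0⟩
    have hvol : volume s = 1 := by
      have : s = Set.univ := by
        ext x
        simp only [Set.mem_Icc, Set.mem_univ, iff_true]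
        constructor <;> · intro i; exact i.elim0
      rw [this]
      simp [MeasureTheory.volume_pi, Measure.pi_univ]
    have hZval : Z = Real.exp (g 0 / η) := by
      rw [hZ]
      have : ∀ k ∈ s, Real.exp (g k / η) = Real.exp (g 0 / η) := by
        intro k _; congr 1; rw [Subsingleton.elim k 0]
      rw [setIntegral_congr_fun hsmeas this, setIntegral_const, measureReal_def, hvol]
      simp
    have hρ1 : ∀ k, ρ k = 1 := by
      intro k
      rw [hρ k, hZval, Subsingleton.elim k 0, div_self (Real.exp_ne_zero _)]
    simp [hρ1]
  -- main case
  have hm1 : (1 : ℝ) ≤ (m : ℝ) := by exact_mod_cast Nat.one_le_iff_ne_zero.2 hm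
  have hm0 : (0 : ℝ) < (m : ℝ) := lt_of_lt_of_le one_pos hm1
  have h01 : (0 : Fin m → ℝ) ≤ 1 := fun i => zero_le_one
  have hsne : s.Nonempty := ⟨0, le_refl _, h01⟩
  have hgc : ContinuousOn g s := by
    have : LipschitzOnWith (Real.toNNReal Lg) g s := by
      rw [lipschitzOnWith_iff_dist_le_mul]
      intro x hx y hy
      rw [Real.dist_eq, dist_eq_norm]
      calc |g x - g y| ≤ Lg * ‖x - y‖ := hLip x hx y hy
        _ = (Real.toNNReal Lg : ℝ) * ‖x - y‖ := by
            rw [Real.coe_toNNReal _ hLg.le]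
    exact this.continuousOn
  obtain ⟨x0, hx0s, hx0max⟩ := hscomp.exists_isMaxOn hsne hgc
  have hfc : ContinuousOn (fun k => Real.exp (g k / η)) s :=
    Real.continuous_exp.comp_continuousOn (hgc.div_const η)
  have hfint : IntegrableOn (fun k => Real.exp (g k / η)) s volume :=
    hfc.integrableOn_compact hscomp
  -- lower bound on Z
  have hZlb : ∀ δ : ℝ, 0 < δ → δ ≤ 1 →
      δ ^ m * Real.exp ((g x0 - Lg * δ) / η) ≤ Z := by
    intro δ hδ0 hδ1
    set c : Fin m → ℝ := fun i => min (x0 i) (1 - δ) with hc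
    set d : Fin m → ℝ := fun i => c i + δ with hd
    have hcd : c ≤ d := fun i => by simp [hd, hδ0.le]
    have hCs : Set.Icc c d ⊆ s := by
      intro k hk
      refine ⟨fun i => ?_, fun i => ?_⟩
      · show (0:ℝ) ≤ k i
        refine le_trans ?_ (hk.1 i)
        have hx0i : (0:ℝ) ≤ x0 i := hx0s.1 i
        exact le_min hx0i (by linarith)
      · show k i ≤ (1:ℝ)
        refine le_trans (hk.2 i) ?_
        have : c i ≤ 1 - δ := min_le_right _ _
        simp only [hd]
        linarith
    have hnear : ∀ k ∈ Set.Icc c d, g x0 - Lg * δ ≤ g k := by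
      intro k hk
      have hks : k ∈ s := hCs hk
      have hdist : ‖k - x0‖ ≤ δ := by
        rw [pi_norm_le_iff_of_nonneg hδ0.le]
        intro i
        rw [Real.norm_eq_abs, abs_le]
        have h1 := hk.1 i
        have h2 := hk.2 i
        have h3 : c i ≤ x0 i := min_le_left _ _
        have h4 : x0 i ≤ c i + δ := by
          rcases le_or_gt (x0 i) (1 - δ) with h | h
          · simp only [hc]; rw [min_eq_left h]; linarith
          · have hx1 : x0 i ≤ (1:ℝ) := hx0s.2 i
            simp only [hc]; rw [min_eq_right h.le]; linarith
        simp only [Pi.sub_apply]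
        constructor <;> simp only [hd] at h2 ⊢ <;> linarith
      have habs : |g k - g x0| ≤ Lg * δ :=
        (hLip k hks x0 hx0s).trans (by nlinarith)
      linarith [abs_le.1 habs]
    have hint1 : IntegrableOn (fun _ : Fin m → ℝ => Real.exp ((g x0 - Lg * δ) / η))
        (Set.Icc c d) volume :=
      integrableOn_const (isCompact_Icc.measure_lt_top.ne)
    have hint2 : IntegrableOn (fun k => Real.exp (g k / η)) (Set.Icc c d) volume :=
      hfint.mono_set hCs
    calc δ ^ m * Real.exp ((g x0 - Lg * δ) / η)
        = ∫ _ in Set.Icc c d, Real.exp ((g x0 - Lg * δ) / η) := by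
          rw [setIntegral_const, smul_eq_mul, measureReal_def, Real.volume_Icc_pi_toReal hcd]
          simp [hd]
      _ ≤ ∫ k in Set.Icc c d, Real.exp (g k / η) := by
          refine setIntegral_mono_on hint1 hint2 measurableSet_Icc fun k hk => ?_
          exact Real.exp_le_exp.2 (by gcongr; exact hnear k hk)
      _ ≤ ∫ k in s, Real.exp (g k / η) := by
          refine setIntegral_mono_set hfint ?_ (HasSubset.Subset.eventuallyLE hCs)
          exact Filter.Eventually.of_forall fun k => (Real.exp_pos _).le
      _ = Z := hZ.symm
  have hZ0 : 0 < Z := lt_of_lt_of_le (by positivity) (hZlb 1 one_pos le_rfl)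
  -- ρ facts
  have hρpos : ∀ k, 0 < ρ k := fun k => by
    rw [hρ k]; exact div_pos (Real.exp_pos _) hZ0
  have hρc : ContinuousOn ρ s := by
    have : ContinuousOn (fun k => Real.exp (g k / η) / Z) s := hfc.div_const Z
    exact this.congr fun k _ => hρ k
  have hρint : IntegrableOn ρ s volume := hρc.integrableOn_compact hscomp
  have hρ1 : ∫ k in s, ρ k = 1 := by
    have : ∀ k ∈ s, ρ k = Real.exp (g k / η) / Z := fun k _ => hρ k
    rw [setIntegral_congr_fun hsmeas this, integral_div, ← hZ, div_self hZ0.ne']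
  have hint1 : IntegrableOn (fun k => Real.log (ρ k) * ρ k) s volume := by
    refine ContinuousOn.integrableOn_compact hscomp ?_
    exact (hρc.log fun k _ => (hρpos k).ne').mul hρc
  have hint2 : IntegrableOn (fun k => (g x0 / η - Real.log Z) * ρ k) s volume :=
    hρint.const_mul _
  have hmain : (∫ k in s, Real.log (ρ k) * ρ k) ≤ g x0 / η - Real.log Z := by
    calc (∫ k in s, Real.log (ρ k) * ρ k)
        ≤ ∫ k in s, (g x0 / η - Real.log Z) * ρ k := by
          refine setIntegral_mono_on hint1 hint2 hsmeas fun k hk => ?_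
          refine mul_le_mul_of_nonneg_right ?_ (hρpos k).le
          rw [hρ k, Real.log_div (Real.exp_ne_zero _) hZ0.ne', Real.log_exp]
          have : g k ≤ g x0 := hx0max hk
          have h2 : g k / η ≤ g x0 / η := by gcongr
          linarith
      _ = g x0 / η - Real.log Z := by
          rw [integral_const_mul, hρ1, mul_one]
  -- choose δ and conclude
  set δ : ℝ := min 1 ((m : ℝ) * η / Lg) with hδdef
  have hδ0 : 0 < δ := lt_min one_pos (by positivity)
  have hδ1 : δ ≤ 1 := min_le_left _ _
  have hlogZ : (m : ℝ) * Real.log δ + (g x0 - Lg * δ) / η ≤ Real.log Z := by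
    calc (m : ℝ) * Real.log δ + (g x0 - Lg * δ) / η
        = Real.log (δ ^ m * Real.exp ((g x0 - Lg * δ) / η)) := by
          rw [Real.log_mul (pow_ne_zero _ hδ0.ne') (Real.exp_ne_zero _),
            Real.log_pow, Real.log_exp]
      _ ≤ Real.log Z := Real.log_le_log (by positivity) (hZlb δ hδ0 hδ1)
  have hbound : (∫ k in s, Real.log (ρ k) * ρ k)
      ≤ Lg * δ / η - (m : ℝ) * Real.log δ := by
    have h : g x0 / η - Real.log Z ≤ Lg * δ / η - (m : ℝ) * Real.log δ := by
      have heq : g x0 / η - ((g x0 - Lg * δ) / η) = Lg * δ / η := by ring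
      linarith
    linarith [hmain]
  rcases le_or_gt ((m : ℝ) * η) Lg with hcase | hcase
  · -- δ = mη/Lg
    have hδeq : δ = (m : ℝ) * η / Lg :=
      min_eq_right (by rw [div_le_one hLg]; exact hcase)
    have h1 : Lg * δ / η = (m : ℝ) := by rw [hδeq]; field_simp
    have hRHS : Real.log ((Real.exp 1 * Lg / m) * η⁻¹) = 1 - Real.log δ := by
      rw [hδeq]
      have hx : (Real.exp 1 * Lg / (m : ℝ)) * η⁻¹
          = Real.exp 1 * ((m : ℝ) * η / Lg)⁻¹ := by
        field_simp
      rw [hx, Real.log_mul (Real.exp_ne_zero _) (by positivity), Real.log_exp,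
        Real.log_inv]
      ring
    have : Lg * δ / η - (m : ℝ) * Real.log δ
        ≤ (m : ℝ) * max (Real.log ((Real.exp 1 * Lg / m) * η⁻¹)) 1 := by
      rw [h1, hRHS]
      have : (m : ℝ) - (m : ℝ) * Real.log δ = (m : ℝ) * (1 - Real.log δ) := by ring
      rw [this]
      exact mul_le_mul_of_nonneg_left (le_max_left _ _) hm0.le
    linarith [hbound]
  · -- δ = 1
    have hδeq : δ = 1 :=
      min_eq_left (by rw [le_div_iff₀ hLg]; linarith)
    have : Lg * δ / η - (m : ℝ) * Real.log δ ≤ (m : ℝ) := by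
      rw [hδeq, Real.log_one, mul_one, mul_zero, sub_zero, div_le_iff₀ hη]
      linarith
    have hmax : (m : ℝ) ≤ (m : ℝ) * max (Real.log ((Real.exp 1 * Lg / m) * η⁻¹)) 1 := by
      nth_rewrite 1 [← mul_one (m : ℝ)]
      exact mul_le_mul_of_nonneg_left (le_max_right _ _) hm0.le
    linarith [hbound]
end

section
/- Let F := argmax_{p ∈ Δ_N} I(p,W) and S_max := min_{p ∈ F} sᵀp. If S ≥ S_max, then C_S(W) = max{ −rᵀp + H(Wᵀp) : p ∈ Δ_N }. If S < S_max, then C_S(W) = max{ −rᵀp + H(Wᵀp) : p ∈ Δ_N, sᵀp = S }; that is, the average-cost inequality constraint can be replaced by an equality without changing the optimal value. -/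
/-- Shannon entropy (base 2) of a finite nonnegative vector. -/
noncomputable def entropy2 {M : ℕ} (q : Fin M → ℝ) : ℝ :=
  ∑ j, -(q j * Real.logb 2 (q j))

/-- Mutual information (base 2) of an input distribution `p` and a channel matrix `W`. -/
noncomputable def mutualInfoDMC {N M : ℕ} (W : Matrix (Fin N) (Fin M) ℝ)
    (p : Fin N → ℝ) : ℝ :=
  ∑ i, ∑ j, p i * W i j * Real.logb 2 (W i j / ∑ k, p k * W k j)

/-- Auxiliary objective: `-rᵀp + H(Wᵀp)`. -/
noncomputable def Jfun {N M : ℕ} (W : Matrix (Fin N) (Fin M) ℝ) (r : Fin N → ℝ)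
    (p : Fin N → ℝ) : ℝ :=
  -(∑ i, r i * p i) + entropy2 (fun j => ∑ i, p i * W i j)

lemma entropy2_eq {M : ℕ} (q : Fin M → ℝ) :
    entropy2 q = (∑ j, Real.negMulLog (q j)) / Real.log 2 := by
  rw [entropy2, Finset.sum_div]
  refine Finset.sum_congr rfl fun j _ => ?_
  simp only [Real.negMulLog, Real.logb]
  ring

lemma Jfun_continuous {N M : ℕ} (W : Matrix (Fin N) (Fin M) ℝ) (r : Fin N → ℝ) :
    Continuous (Jfun W r) := by
  have h : Jfun W r = fun p =>
      -(∑ i, r i * p i) + (∑ j, Real.negMulLog (∑ i, p i * W i j)) / Real.log 2 := by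
    funext p; rw [Jfun, entropy2_eq]
  rw [h]
  apply Continuous.add
  · exact (continuous_finset_sum _ fun i _ => continuous_const.mul (continuous_apply i)).neg
  · apply Continuous.div_const
    exact continuous_finset_sum _ fun j _ =>
      Real.continuous_negMulLog.comp
        (continuous_finset_sum _ fun i _ => (continuous_apply i).mul continuous_const)

lemma mi_eq_Jfun {N M : ℕ} (W : Matrix (Fin N) (Fin M) ℝ) (hWnn : ∀ i j, 0 ≤ W i j)
    (r : Fin N → ℝ) (hr : ∀ i, r i = -(∑ j, W i j * Real.logb 2 (W i j)))
    (p : Fin N → ℝ) (hp : ∀ i, 0 ≤ p i) :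
    mutualInfoDMC W p = Jfun W r p := by
  have hQle : ∀ i j, p i * W i j ≤ ∑ k, p k * W k j := fun i j =>
    Finset.single_le_sum (f := fun k => p k * W k j)
      (fun k _ => mul_nonneg (hp k) (hWnn k j)) (Finset.mem_univ i)
  have key : ∀ i j, p i * W i j * Real.logb 2 (W i j / ∑ k, p k * W k j)
      = p i * (W i j * Real.logb 2 (W i j))
        - p i * W i j * Real.logb 2 (∑ k, p k * W k j) := by
    intro i j
    by_cases h : p i * W i j = 0
    · rcases mul_eq_zero.mp h with h0 | h0 <;> simp [h0]
    · have hW : W i j ≠ 0 := fun h' => h (by rw [h', mul_zero])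
      have hQpos : (0:ℝ) < ∑ k, p k * W k j :=
        lt_of_lt_of_le (lt_of_le_of_ne (mul_nonneg (hp i) (hWnn i j)) (Ne.symm h)) (hQle i j)
      rw [Real.logb_div hW (ne_of_gt hQpos)]
      ring
  rw [mutualInfoDMC, Jfun, entropy2]
  have hL : (∑ i, ∑ j, p i * W i j * Real.logb 2 (W i j / ∑ k, p k * W k j))
      = (∑ i, ∑ j, p i * (W i j * Real.logb 2 (W i j)))
        - ∑ i, ∑ j, p i * W i j * Real.logb 2 (∑ k, p k * W k j) := by
    rw [← Finset.sum_sub_distrib]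
    refine Finset.sum_congr rfl fun i _ => ?_
    rw [← Finset.sum_sub_distrib]
    exact Finset.sum_congr rfl fun j _ => key i j
  rw [hL]
  have h1 : (∑ i, ∑ j, p i * (W i j * Real.logb 2 (W i j))) = -(∑ i, r i * p i) := by
    rw [← Finset.sum_neg_distrib]
    refine Finset.sum_congr rfl fun i _ => ?_
    rw [hr i, neg_mul, neg_neg, Finset.sum_mul]
    exact Finset.sum_congr rfl fun j _ => by ring
  have h2 : (∑ i, ∑ j, p i * W i j * Real.logb 2 (∑ k, p k * W k j))
      = ∑ j, ((∑ i, p i * W i j) * Real.logb 2 (∑ i, p i * W i j)) := by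
    rw [Finset.sum_comm]
    exact Finset.sum_congr rfl fun j _ => by rw [Finset.sum_mul]
  rw [h1, h2, Finset.sum_neg_distrib]
  ring

lemma Jfun_concave {N M : ℕ} (W : Matrix (Fin N) (Fin M) ℝ) (hWnn : ∀ i j, 0 ≤ W i j)
    (r : Fin N → ℝ) (p q : Fin N → ℝ) (hp : ∀ i, 0 ≤ p i) (hq : ∀ i, 0 ≤ q i)
    (a b : ℝ) (ha : 0 ≤ a) (hb : 0 ≤ b) (hab : a + b = 1) :
    a * Jfun W r p + b * Jfun W r q ≤ Jfun W r (fun i => a * p i + b * q i) := by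
  have hlog2 : (0:ℝ) < Real.log 2 := Real.log_pos one_lt_two
  simp only [Jfun, entropy2_eq]
  have hlin : (∑ i, r i * (a * p i + b * q i))
      = a * (∑ i, r i * p i) + b * (∑ i, r i * q i) := by
    rw [Finset.mul_sum, Finset.mul_sum, ← Finset.sum_add_distrib]
    exact Finset.sum_congr rfl fun i _ => by ring
  have hQ : ∀ j, (∑ i, (a * p i + b * q i) * W i j)
      = a * (∑ i, p i * W i j) + b * (∑ i, q i * W i j) := by
    intro j; rw [Finset.mul_sum, Finset.mul_sum, ← Finset.sum_add_distrib]
    exact Finset.sum_congr rfl fun i _ => by ring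
  have hsum : a * (∑ j, Real.negMulLog (∑ i, p i * W i j))
        + b * (∑ j, Real.negMulLog (∑ i, q i * W i j))
      ≤ ∑ j, Real.negMulLog (∑ i, (a * p i + b * q i) * W i j) := by
    rw [Finset.mul_sum, Finset.mul_sum, ← Finset.sum_add_distrib]
    refine Finset.sum_le_sum fun j _ => ?_
    rw [hQ j]
    have h1 : (∑ i, p i * W i j) ∈ Set.Ici (0:ℝ) :=
      Finset.sum_nonneg fun i _ => mul_nonneg (hp i) (hWnn i j)
    have h2 : (∑ i, q i * W i j) ∈ Set.Ici (0:ℝ) :=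
      Finset.sum_nonneg fun i _ => mul_nonneg (hq i) (hWnn i j)
    simpa [smul_eq_mul] using
      Real.strictConcaveOn_negMulLog.concaveOn.2 h1 h2 ha hb hab
  have hdiv : (a * (∑ j, Real.negMulLog (∑ i, p i * W i j))
        + b * (∑ j, Real.negMulLog (∑ i, q i * W i j))) / Real.log 2
      ≤ (∑ j, Real.negMulLog (∑ i, (a * p i + b * q i) * W i j)) / Real.log 2 := by
    gcongr
  calc a * (-(∑ i, r i * p i) + (∑ j, Real.negMulLog (∑ i, p i * W i j)) / Real.log 2)
        + b * (-(∑ i, r i * q i) + (∑ j, Real.negMulLog (∑ i, q i * W i j)) / Real.log 2)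
      = -(a * (∑ i, r i * p i) + b * (∑ i, r i * q i))
        + (a * (∑ j, Real.negMulLog (∑ i, p i * W i j))
          + b * (∑ j, Real.negMulLog (∑ i, q i * W i j))) / Real.log 2 := by
        field_simp
        ring
    _ ≤ -(a * (∑ i, r i * p i) + b * (∑ i, r i * q i))
        + (∑ j, Real.negMulLog (∑ i, (a * p i + b * q i) * W i j)) / Real.log 2 :=
        add_le_add (le_refl _) hdiv
    _ = -(∑ i, r i * (a * p i + b * q i))
        + (∑ j, Real.negMulLog (∑ i, (a * p i + b * q i) * W i j)) / Real.log 2 := by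
        rw [hlin]

theorem stmt8 (N M : ℕ) (W : Matrix (Fin N) (Fin M) ℝ)
    (hWnn : ∀ i j, 0 ≤ W i j) (hWrow : ∀ i, ∑ j, W i j = 1)
    (s : Fin N → ℝ) (hs : ∀ i, 0 ≤ s i) (S : ℝ) (hS : 0 ≤ S)
    (r : Fin N → ℝ) (hr : ∀ i, r i = -(∑ j, W i j * Real.logb 2 (W i j)))
    (F : Set (Fin N → ℝ))
    (hF : F = {p ∈ stdSimplex ℝ (Fin N) |
      ∀ q ∈ stdSimplex ℝ (Fin N), mutualInfoDMC W q ≤ mutualInfoDMC W p})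
    (Smax : ℝ) (hSmax : Smax = sInf {t | ∃ p ∈ F, t = ∑ i, s i * p i})
    (CS : ℝ) (hCS : CS = sSup {t | ∃ p ∈ stdSimplex ℝ (Fin N),
      (∑ i, s i * p i) ≤ S ∧ t = mutualInfoDMC W p}) :
    (Smax ≤ S →
      CS = sSup {t | ∃ p ∈ stdSimplex ℝ (Fin N),
        t = -(∑ i, r i * p i) + entropy2 (fun j => ∑ i, p i * W i j)}) ∧
    (S < Smax →
      CS = sSup {t | ∃ p ∈ stdSimplex ℝ (Fin N),
        (∑ i, s i * p i) = S ∧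
          t = -(∑ i, r i * p i) + entropy2 (fun j => ∑ i, p i * W i j)}) := by
  rcases Nat.eq_zero_or_pos N with hN | hN
  · subst hN
    have hempty : stdSimplex ℝ (Fin 0) = ∅ := stdSimplex_of_isEmpty_index _ _
    constructor
    · intro _; rw [hCS]; congr 1; ext t; simp [hempty]
    · intro _; rw [hCS]; congr 1; ext t; simp [hempty]
  set Δ := stdSimplex ℝ (Fin N) with hΔdef
  set J := Jfun W r with hJdef
  have hΔne : Δ.Nonempty := ⟨Pi.single ⟨0, hN⟩ 1, single_mem_stdSimplex ℝ _⟩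
  have hΔc : IsCompact Δ := isCompact_stdSimplex _ _
  have hΔcl : IsClosed Δ := isClosed_stdSimplex _ _
  have hJc : Continuous J := Jfun_continuous W r
  have hmi : ∀ p ∈ Δ, mutualInfoDMC W p = J p := fun p hp =>
    mi_eq_Jfun W hWnn r hr p hp.1
  -- global maximizer of J on the simplex
  obtain ⟨phat, hphat, hmaxf⟩ := hΔc.exists_isMaxOn hΔne hJc.continuousOn
  have hmax : ∀ q ∈ Δ, J q ≤ J phat := fun q hq => (isMaxOn_iff.mp hmaxf) q hq
  -- characterization of F
  have hFeq : F = Δ ∩ {p | J phat ≤ J p} := by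
    rw [hF]; ext p
    constructor
    · rintro ⟨hp, h⟩
      refine ⟨hp, ?_⟩
      have := h phat hphat
      rw [hmi phat hphat, hmi p hp] at this
      exact this
    · rintro ⟨hp, h⟩
      refine ⟨hp, fun q hq => ?_⟩
      rw [hmi q hq, hmi p hp]
      exact le_trans (hmax q hq) h
  have hFsub : F ⊆ Δ := by rw [hFeq]; exact Set.inter_subset_left
  have hphatF : phat ∈ F := by rw [hFeq]; exact ⟨hphat, show J phat ≤ J phat from le_rfl⟩
  have hFmax : ∀ p ∈ F, J p = J phat := by
    rw [hFeq]; rintro p ⟨hp, h⟩; exact le_antisymm (hmax p hp) h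
  have hFc : IsCompact F := by
    rw [hFeq]
    exact hΔc.inter_right (isClosed_le continuous_const hJc)
  -- the cost function
  have hscont : Continuous (fun p : Fin N → ℝ => ∑ i, s i * p i) :=
    continuous_finset_sum _ fun i _ => continuous_const.mul (continuous_apply i)
  obtain ⟨p0, hp0F, hminf⟩ := hFc.exists_isMinOn ⟨phat, hphatF⟩ hscont.continuousOn
  have hmin : ∀ p ∈ F, (∑ i, s i * p0 i) ≤ ∑ i, s i * p i := fun p hp =>
    (isMinOn_iff.mp hminf) p hp
  have hp0Δ : p0 ∈ Δ := hFsub hp0F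
  have hp0max : J p0 = J phat := hFmax p0 hp0F
  have hSmax0 : Smax = ∑ i, s i * p0 i := by
    rw [hSmax]
    apply le_antisymm
    · exact csInf_le ⟨∑ i, s i * p0 i, by rintro t ⟨p, hp, rfl⟩; exact hmin p hp⟩
        ⟨p0, hp0F, rfl⟩
    · exact le_csInf ⟨∑ i, s i * p0 i, p0, hp0F, rfl⟩
        (by rintro t ⟨p, hp, rfl⟩; exact hmin p hp)
  -- the three sets in terms of J
  have hAeq : {t | ∃ p ∈ stdSimplex ℝ (Fin N),
      (∑ i, s i * p i) ≤ S ∧ t = mutualInfoDMC W p}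
      = {t | ∃ p ∈ Δ, (∑ i, s i * p i) ≤ S ∧ t = J p} := by
    ext t
    constructor
    · rintro ⟨p, hp, hsp, rfl⟩; exact ⟨p, hp, hsp, hmi p hp⟩
    · rintro ⟨p, hp, hsp, rfl⟩; exact ⟨p, hp, hsp, (hmi p hp).symm⟩
  have hBmem : ∀ t ∈ {t | ∃ p ∈ Δ, t = J p}, t ≤ J phat := by
    rintro t ⟨p, hp, rfl⟩; exact hmax p hp
  have hBbdd : BddAbove {t | ∃ p ∈ Δ, t = J p} := ⟨J phat, hBmem⟩
  have hAbdd : BddAbove {t | ∃ p ∈ Δ, (∑ i, s i * p i) ≤ S ∧ t = J p} :=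
    hBbdd.mono (by rintro t ⟨p, hp, _, rfl⟩; exact ⟨p, hp, rfl⟩)
  have hCbdd : BddAbove {t | ∃ p ∈ Δ, (∑ i, s i * p i) = S ∧ t = J p} :=
    hBbdd.mono (by rintro t ⟨p, hp, _, rfl⟩; exact ⟨p, hp, rfl⟩)
  constructor
  · -- Smax ≤ S
    intro hle
    have hp0feas : (∑ i, s i * p0 i) ≤ S := by rw [← hSmax0]; exact hle
    rw [hCS, hAeq]
    have hBset : {t | ∃ p ∈ stdSimplex ℝ (Fin N),
        t = -(∑ i, r i * p i) + entropy2 (fun j => ∑ i, p i * W i j)}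
        = {t | ∃ p ∈ Δ, t = J p} := rfl
    rw [hBset]
    apply le_antisymm
    · exact csSup_le_csSup hBbdd ⟨J p0, p0, hp0Δ, hp0feas, rfl⟩
        (by rintro t ⟨p, hp, _, rfl⟩; exact ⟨p, hp, rfl⟩)
    · refine csSup_le ⟨J phat, phat, hphat, rfl⟩ ?_
      rintro t ⟨p, hp, rfl⟩
      calc J p ≤ J phat := hmax p hp
        _ = J p0 := hp0max.symm
        _ ≤ sSup {t | ∃ p ∈ Δ, (∑ i, s i * p i) ≤ S ∧ t = J p} :=
            le_csSup hAbdd ⟨p0, hp0Δ, hp0feas, rfl⟩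
  · -- S < Smax
    intro hlt
    rw [hCS, hAeq]
    have hCset : {t | ∃ p ∈ stdSimplex ℝ (Fin N),
        (∑ i, s i * p i) = S ∧
          t = -(∑ i, r i * p i) + entropy2 (fun j => ∑ i, p i * W i j)}
        = {t | ∃ p ∈ Δ, (∑ i, s i * p i) = S ∧ t = J p} := rfl
    rw [hCset]
    by_cases hAne : {t | ∃ p ∈ Δ, (∑ i, s i * p i) ≤ S ∧ t = J p}.Nonempty
    · -- feasible region nonempty: maximize J over it
      have hAne' := hAne
      obtain ⟨t1, p1, hp1, hsp1, _⟩ := hAne'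
      have hKc : IsCompact (Δ ∩ {p | (∑ i, s i * p i) ≤ S}) :=
        hΔc.inter_right (isClosed_le hscont continuous_const)
      obtain ⟨pst, hpstK, hmaxKf⟩ := hKc.exists_isMaxOn ⟨p1, hp1, hsp1⟩ hJc.continuousOn
      have hmaxK : ∀ p ∈ Δ, (∑ i, s i * p i) ≤ S → J p ≤ J pst := fun p hp hsp =>
        (isMaxOn_iff.mp hmaxKf) p ⟨hp, hsp⟩
      -- find a point on the boundary with at least as large a value
      have hbdry : ∃ p', p' ∈ Δ ∧ (∑ i, s i * p' i) = S ∧ J pst ≤ J p' := by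
        rcases eq_or_lt_of_le (show (∑ i, s i * pst i) ≤ S from hpstK.2) with heq | hltst
        · exact ⟨pst, hpstK.1, heq, le_refl _⟩
        · set σ0 := ∑ i, s i * pst i with hσ0
          set σ1 := ∑ i, s i * p0 i with hσ1
          have hσ01 : σ0 < S := hltst
          have hSσ1 : S < σ1 := by rw [← hSmax0]; exact hlt
          have hden : (0:ℝ) < σ1 - σ0 := by linarith
          set a := (σ1 - S) / (σ1 - σ0) with ha_def
          set b := (S - σ0) / (σ1 - σ0) with hb_def
          have ha : 0 ≤ a := div_nonneg (by linarith) hden.le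
          have hb : 0 ≤ b := div_nonneg (by linarith) hden.le
          have hab : a + b = 1 := by
            rw [ha_def, hb_def, ← add_div]
            field_simp
            ring
          set p' := a • pst + b • p0 with hp'def
          have hp'Δ : p' ∈ Δ := convex_stdSimplex ℝ _ hpstK.1 hp0Δ ha hb hab
          have hp'fun : p' = fun i => a * pst i + b * p0 i := by
            funext i; simp [hp'def, smul_eq_mul]
          have hsp' : (∑ i, s i * p' i) = S := by
            rw [hp'fun]
            have : (∑ i, s i * (a * pst i + b * p0 i)) = a * σ0 + b * σ1 := by
              rw [hσ0, hσ1, Finset.mul_sum, Finset.mul_sum, ← Finset.sum_add_distrib]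
              exact Finset.sum_congr rfl fun i _ => by ring
            rw [this, ha_def, hb_def]
            field_simp
            ring
          have hconc : a * J pst + b * J p0 ≤ J p' := by
            rw [hp'fun, hJdef]
            exact Jfun_concave W hWnn r pst p0 hpstK.1.1 hp0Δ.1 a b ha hb hab
          have hJ0 : J pst ≤ J p0 := by
            rw [hp0max]; exact hmax pst hpstK.1
          have : J pst ≤ J p' := by
            calc J pst = (a + b) * J pst := by rw [hab]; ring
              _ = a * J pst + b * J pst := by ring
              _ ≤ a * J pst + b * J p0 :=
                  add_le_add (le_refl _) (mul_le_mul_of_nonneg_left hJ0 hb)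
              _ ≤ J p' := hconc
          exact ⟨p', hp'Δ, hsp', this⟩
      obtain ⟨p', hp'Δ, hsp', hJp'⟩ := hbdry
      apply le_antisymm
      · refine csSup_le hAne ?_
        rintro t ⟨p, hp, hsp, rfl⟩
        calc J p ≤ J pst := hmaxK p hp hsp
          _ ≤ J p' := hJp'
          _ ≤ sSup {t | ∃ p ∈ Δ, (∑ i, s i * p i) = S ∧ t = J p} :=
              le_csSup hCbdd ⟨p', hp'Δ, hsp', rfl⟩
      · exact csSup_le_csSup hAbdd ⟨J p', p', hp'Δ, hsp', rfl⟩
          (by rintro t ⟨p, hp, hsp, rfl⟩; exact ⟨p, hp, le_of_eq hsp, rfl⟩)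
    · -- feasible region empty: both sets are empty
      have hA0 : {t | ∃ p ∈ Δ, (∑ i, s i * p i) ≤ S ∧ t = J p} = ∅ :=
        Set.not_nonempty_iff_eq_empty.mp hAne
      have hC0 : {t | ∃ p ∈ Δ, (∑ i, s i * p i) = S ∧ t = J p} = ∅ := by
        rw [Set.eq_empty_iff_forall_notMem]
        rintro t ⟨p, hp, hsp, rfl⟩
        exact Set.eq_empty_iff_forall_notMem.mp hA0 (J p) ⟨p, hp, le_of_eq hsp, rfl⟩
      rw [hA0, hC0]
end

section
/- Assume γ := min_{i,j} W_{ij} > 0 and that {p ∈ Δ_N : sᵀp = S} is nonempty. Then inf_{λ ∈ ℝ^M} ( G(λ) + F(λ) ) = inf{ G(λ) + F(λ) : λ ∈ ℝ^M, ‖λ‖₂ ≤ M·max{ log(1/γ), 1/ln 2 } }; i.e., the unconstrained dual problem is equivalent to its restriction to the Euclidean ball of radius M·(log(1/γ) ∨ 1/ln 2). -/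
lemma simplex_le_one {n : ℕ} {x : Fin n → ℝ} (hx : x ∈ stdSimplex ℝ (Fin n)) (k : Fin n) :
    x k ≤ 1 := by
  have := Finset.single_le_sum (fun i _ => hx.1 i) (Finset.mem_univ k)
  rw [hx.2] at this; exact this

lemma F_isGreatest {M : ℕ} (hM : 0 < M) (ν : Fin M → ℝ) :
    IsGreatest {t | ∃ q ∈ stdSimplex ℝ (Fin M), t = entropy2 q - ∑ j, ν j * q j}
      (Real.logb 2 (∑ j, (2:ℝ) ^ (-ν j))) := by
  have hL : (0:ℝ) < Real.log 2 := Real.log_pos (by norm_num)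
  set L := Real.log 2 with hLdef
  set Z := ∑ j, (2:ℝ) ^ (-ν j) with hZdef
  have hZpos : 0 < Z := by
    apply Finset.sum_pos (fun j _ => Real.rpow_pos_of_pos (by norm_num) _)
    exact ⟨⟨0, hM⟩, Finset.mem_univ _⟩
  constructor
  · refine ⟨fun j => (2:ℝ) ^ (-ν j) / Z, ⟨fun j => by positivity, ?_⟩, ?_⟩
    · rw [← Finset.sum_div, ← hZdef, div_self hZpos.ne']
    · rw [entropy2, ← Finset.sum_sub_distrib]
      have : ∀ j : Fin M, -((2:ℝ) ^ (-ν j) / Z * Real.logb 2 ((2:ℝ) ^ (-ν j) / Z))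
          - ν j * ((2:ℝ) ^ (-ν j) / Z) = ((2:ℝ) ^ (-ν j) / Z) * Real.logb 2 Z := by
        intro j
        rw [Real.logb_div (by positivity) hZpos.ne',
          Real.logb_rpow (by norm_num) (by norm_num)]
        ring
      rw [Finset.sum_congr rfl (fun j _ => this j), ← Finset.sum_mul, ← Finset.sum_div,
        ← hZdef, div_self hZpos.ne', one_mul]
  · rintro t ⟨q, ⟨hq0, hq1⟩, rfl⟩
    have key : ∀ j : Fin M, -(q j * Real.log (q j)) - ν j * q j * L - q j * Real.log Z
        ≤ (2:ℝ) ^ (-ν j) / Z - q j := by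
      intro j
      rcases eq_or_lt_of_le (hq0 j) with h | h
      · rw [← h]; simp; positivity
      · have hlog := Real.log_le_sub_one_of_pos
          (show (0:ℝ) < (2:ℝ) ^ (-ν j) / (q j * Z) by positivity)
        have e0 : Real.log ((2:ℝ) ^ (-ν j) / (q j * Z))
            = -ν j * L - Real.log (q j) - Real.log Z := by
          rw [Real.log_div (by positivity) (by positivity),
            Real.log_mul h.ne' hZpos.ne', Real.log_rpow (by norm_num)]
          ring
        have e1 : q j * ((2:ℝ) ^ (-ν j) / (q j * Z)) = (2:ℝ) ^ (-ν j) / Z := by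
          field_simp
        have h2 := mul_le_mul_of_nonneg_left hlog h.le
        rw [mul_sub, mul_one, e1, e0] at h2
        nlinarith
    have hsum := Finset.sum_le_sum (s := Finset.univ) (fun j _ => key j)
    have eA : ∑ x, (-(q x * Real.log (q x)) - ν x * q x * L - q x * Real.log Z)
        = (∑ x, (-(q x * Real.log (q x)) - ν x * q x * L)) - Real.log Z := by
      rw [Finset.sum_sub_distrib, ← Finset.sum_mul, hq1, one_mul]
    have eB : ∑ i, ((2:ℝ) ^ (-ν i) / Z - q i) = 0 := by
      rw [Finset.sum_sub_distrib, ← Finset.sum_div, ← hZdef, div_self hZpos.ne', hq1, sub_self]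
    rw [eA, eB] at hsum
    have e2 : entropy2 q - ∑ j, ν j * q j
        = (∑ j, (-(q j * Real.log (q j)) - ν j * q j * L)) / L := by
      rw [entropy2, ← Finset.sum_sub_distrib, Finset.sum_div]
      refine Finset.sum_congr rfl (fun j _ => ?_)
      rw [Real.logb, ← hLdef]
      field_simp
    rw [e2, Real.logb, ← hLdef]
    gcongr
    linarith

set_option maxHeartbeats 1000000 in
theorem stmt10 (N M : ℕ) (W : Matrix (Fin N) (Fin M) ℝ)
    (hWnn : ∀ i j, 0 ≤ W i j) (hWrow : ∀ i, ∑ j, W i j = 1)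
    (s : Fin N → ℝ) (hs : ∀ i, 0 ≤ s i) (S : ℝ) (hS : 0 ≤ S)
    (r : Fin N → ℝ) (hr : ∀ i, r i = -(∑ j, W i j * Real.logb 2 (W i j)))
    -- γ is the minimal entry of the channel matrix, assumed positive
    (γ : ℝ) (hγmin : IsLeast {t | ∃ i j, t = W i j} γ) (hγpos : 0 < γ)
    -- feasibility of the primal constraint set
    (hfeas : ∃ p ∈ stdSimplex ℝ (Fin N), (∑ i, s i * p i) = S)
    (F G : (Fin M → ℝ) → ℝ)
    (hF : ∀ lam, F lam = sSup {t | ∃ q ∈ stdSimplex ℝ (Fin M),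
      t = entropy2 q - ∑ j, lam j * q j})
    (hG : ∀ lam, G lam = sSup {t | ∃ p ∈ stdSimplex ℝ (Fin N),
      (∑ i, s i * p i) = S ∧
        t = -(∑ i, r i * p i) + ∑ j, lam j * (∑ i, p i * W i j)}) :
    sInf {t | ∃ lam : Fin M → ℝ, t = G lam + F lam} =
      sInf {t | ∃ lam : Fin M → ℝ,
        Real.sqrt (∑ j, (lam j) ^ 2) ≤ (M : ℝ) * max (Real.logb 2 γ⁻¹) (1 / Real.log 2) ∧
          t = G lam + F lam} := by
  classical
  obtain ⟨i0, j0, hij0⟩ := hγmin.1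
  have hM : 0 < M := j0.pos
  have hγle : ∀ i j, γ ≤ W i j := fun i j => hγmin.2 ⟨i, j, rfl⟩
  have hγ1 : γ ≤ 1 := by
    have h1 := hγle i0 j0
    have h2 : W i0 j0 ≤ 1 := by
      have := Finset.single_le_sum (fun k _ => hWnn i0 k) (Finset.mem_univ j0)
      rw [hWrow i0] at this; exact this
    linarith
  have hL : (0:ℝ) < Real.log 2 := Real.log_pos (by norm_num)
  set L := Real.log 2 with hLdef
  set T := Real.logb 2 γ⁻¹ with hTdef
  have hγinv : (1:ℝ) ≤ γ⁻¹ := by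
    nlinarith [mul_inv_cancel₀ hγpos.ne', inv_pos.mpr hγpos]
  have hT0 : 0 ≤ T := Real.logb_nonneg (by norm_num) hγinv
  have h2T : (2:ℝ) ^ (-T) = γ := by
    rw [Real.rpow_neg (by norm_num), hTdef,
      Real.rpow_logb (by norm_num) (by norm_num) (inv_pos.mpr hγpos), inv_inv]
  -- the image q = Wᵀp of a simplex point is in the simplex
  have hWq : ∀ p ∈ stdSimplex ℝ (Fin N),
      (fun j => ∑ i, p i * W i j) ∈ stdSimplex ℝ (Fin M) := by
    intro p hp
    constructor
    · intro j; exact Finset.sum_nonneg fun i _ => mul_nonneg (hp.1 i) (hWnn i j)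
    · rw [Finset.sum_comm]
      calc ∑ i, ∑ j, p i * W i j = ∑ i, p i := by
            refine Finset.sum_congr rfl fun i _ => ?_
            rw [← Finset.mul_sum, hWrow, mul_one]
        _ = 1 := hp.2
  have hγq : ∀ p ∈ stdSimplex ℝ (Fin N), ∀ j, γ ≤ ∑ i, p i * W i j := by
    intro p hp j
    calc γ = ∑ i, p i * γ := by rw [← Finset.sum_mul, hp.2, one_mul]
      _ ≤ ∑ i, p i * W i j :=
        Finset.sum_le_sum fun i _ => mul_le_mul_of_nonneg_left (hγle i j) (hp.1 i)
  obtain ⟨p0, hp0, hp0S⟩ := hfeas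
  have hq0 := hWq p0 hp0
  -- G set facts
  have hGne : ∀ lam : Fin M → ℝ, Set.Nonempty {t | ∃ p ∈ stdSimplex ℝ (Fin N),
      (∑ i, s i * p i) = S ∧
        t = -(∑ i, r i * p i) + ∑ j, lam j * (∑ i, p i * W i j)} :=
    fun lam => ⟨_, p0, hp0, hp0S, rfl⟩
  have hGub : ∀ lam : Fin M → ℝ, ∀ t ∈ {t | ∃ p ∈ stdSimplex ℝ (Fin N),
      (∑ i, s i * p i) = S ∧
        t = -(∑ i, r i * p i) + ∑ j, lam j * (∑ i, p i * W i j)},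
      t ≤ (∑ i, |r i|) + ∑ j, |lam j| := by
    rintro lam t ⟨p, hp, hpS, rfl⟩
    have h1 : -(∑ i, r i * p i) ≤ ∑ i, |r i| := by
      calc -(∑ i, r i * p i) = ∑ i, -(r i * p i) := by rw [← Finset.sum_neg_distrib]
        _ ≤ ∑ i, |r i| := Finset.sum_le_sum fun i _ => by
            have ha := simplex_le_one hp i
            have hb := hp.1 i
            nlinarith [neg_abs_le (r i), abs_nonneg (r i)]
    have hq := hWq p hp
    have h2 : ∑ j, lam j * (∑ i, p i * W i j) ≤ ∑ j, |lam j| :=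
      Finset.sum_le_sum fun j _ => by
        have h0 := hq.1 j
        have hb := simplex_le_one hq j
        nlinarith [le_abs_self (lam j), abs_nonneg (lam j)]
    linarith
  have hGbdd : ∀ lam : Fin M → ℝ, BddAbove {t | ∃ p ∈ stdSimplex ℝ (Fin N),
      (∑ i, s i * p i) = S ∧
        t = -(∑ i, r i * p i) + ∑ j, lam j * (∑ i, p i * W i j)} :=
    fun lam => ⟨_, hGub lam⟩
  have hGle : ∀ lam : Fin M → ℝ, ∀ t ∈ {t | ∃ p ∈ stdSimplex ℝ (Fin N),
      (∑ i, s i * p i) = S ∧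
        t = -(∑ i, r i * p i) + ∑ j, lam j * (∑ i, p i * W i j)}, t ≤ G lam :=
    fun lam t ht => (hG lam) ▸ le_csSup (hGbdd lam) ht
  -- F explicit formula
  have hFeq : ∀ lam : Fin M → ℝ, F lam = Real.logb 2 (∑ j, (2:ℝ) ^ (-lam j)) := by
    intro lam
    rw [hF lam]
    exact (F_isGreatest hM lam).csSup_eq
  have hFge : ∀ lam : Fin M → ℝ, ∀ q ∈ stdSimplex ℝ (Fin M),
      entropy2 q - ∑ j, lam j * q j ≤ F lam := by
    intro lam q hq
    rw [hFeq lam]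
    exact (F_isGreatest hM lam).2 ⟨q, hq, rfl⟩
  -- uniform lower bound for the dual objective
  have hlow : ∀ lam : Fin M → ℝ,
      -(∑ i, r i * p0 i) + entropy2 (fun j => ∑ i, p0 i * W i j) ≤ G lam + F lam := by
    intro lam
    have h1 : -(∑ i, r i * p0 i) + ∑ j, lam j * (∑ i, p0 i * W i j) ≤ G lam :=
      hGle lam _ ⟨p0, hp0, hp0S, rfl⟩
    have h2 := hFge lam _ hq0
    linarith
  have hRad0 : 0 ≤ (M:ℝ) * max T (1/L) :=
    mul_nonneg (Nat.cast_nonneg M) (le_max_of_le_right (by positivity))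
  set A := {t | ∃ lam : Fin M → ℝ, t = G lam + F lam} with hA
  set B := {t | ∃ lam : Fin M → ℝ,
      Real.sqrt (∑ j, (lam j) ^ 2) ≤ (M : ℝ) * max T (1/L) ∧
        t = G lam + F lam} with hB
  have hBA : B ⊆ A := by rintro t ⟨lam, _, h⟩; exact ⟨lam, h⟩
  have hAne : A.Nonempty := ⟨G 0 + F 0, 0, rfl⟩
  have hBne : B.Nonempty := ⟨G 0 + F 0, 0, by simpa using hRad0, rfl⟩
  have hAbdd : BddBelow A := ⟨_, by rintro t ⟨lam, rfl⟩; exact hlow lam⟩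
  have hBbdd : BddBelow B := hAbdd.mono hBA
  refine le_antisymm (csInf_le_csInf hAbdd hBne hBA) (le_csInf hAne ?_)
  rintro t ⟨lam, rfl⟩
  have hne : (Finset.univ : Finset (Fin M)).Nonempty := ⟨j0, Finset.mem_univ _⟩
  set c := Finset.univ.inf' hne lam with hcdef
  have hc : ∀ j, c ≤ lam j := fun j => Finset.inf'_le _ (Finset.mem_univ j)
  obtain ⟨jc, _, hjc⟩ := Finset.exists_mem_eq_inf' hne lam
  rw [← hcdef] at hjc
  set lam' : Fin M → ℝ := fun j => min (lam j - c) T with hlam'def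
  have hl0 : ∀ j, 0 ≤ lam' j := fun j => le_min (by linarith [hc j]) hT0
  have hlT : ∀ j, lam' j ≤ T := fun j => min_le_right _ _
  have hlle : ∀ j, lam' j ≤ lam j - c := fun j => min_le_left _ _
  set D := ∑ j, (lam j - c - lam' j) with hDdef
  have hD0 : 0 ≤ D := Finset.sum_nonneg fun j _ => by linarith [hlle j]
  -- the clipped vector is in the ball
  have hnorm : Real.sqrt (∑ j, (lam' j) ^ 2) ≤ (M:ℝ) * max T (1/L) := by
    have h1 : ∑ j, (lam' j) ^ 2 ≤ ∑ _j : Fin M, T ^ 2 :=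
      Finset.sum_le_sum fun j _ => by nlinarith [hl0 j, hlT j, hT0]
    have h2 : ∑ _j : Fin M, T ^ 2 = (M:ℝ) * T ^ 2 := by
      rw [Finset.sum_const, Finset.card_univ, Fintype.card_fin, nsmul_eq_mul]
    have h4 : Real.sqrt ((M:ℝ) * T ^ 2) = Real.sqrt (M:ℝ) * T := by
      rw [Real.sqrt_mul (Nat.cast_nonneg M), Real.sqrt_sq hT0]
    have hM1 : (1:ℝ) ≤ (M:ℝ) := by exact_mod_cast hM
    have h5 : Real.sqrt (M:ℝ) ≤ (M:ℝ) := by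
      calc Real.sqrt (M:ℝ) ≤ Real.sqrt ((M:ℝ) ^ 2) := Real.sqrt_le_sqrt (by nlinarith)
        _ = (M:ℝ) := Real.sqrt_sq (by positivity)
    calc Real.sqrt (∑ j, (lam' j) ^ 2) ≤ Real.sqrt ((M:ℝ) * T ^ 2) :=
          Real.sqrt_le_sqrt (by linarith)
      _ = Real.sqrt (M:ℝ) * T := h4
      _ ≤ (M:ℝ) * T := mul_le_mul_of_nonneg_right h5 hT0
      _ ≤ (M:ℝ) * max T (1/L) :=
          mul_le_mul_of_nonneg_left (le_max_left _ _) (Nat.cast_nonneg M)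
  -- G decreases enough under clipping
  have hGbound : G lam' ≤ G lam - c - γ * D := by
    rw [hG lam']
    refine csSup_le (hGne lam') ?_
    rintro t ⟨p, hp, hpS, rfl⟩
    have hqm := hWq p hp
    have hper : ∀ j : Fin M, γ * (lam j - c - lam' j) + c * (∑ i, p i * W i j)
        + lam' j * (∑ i, p i * W i j) ≤ lam j * (∑ i, p i * W i j) := by
      intro j
      have h1 := hγq p hp j
      have h2 : 0 ≤ lam j - c - lam' j := by linarith [hlle j]
      nlinarith
    have hsum := Finset.sum_le_sum (s := Finset.univ) fun j _ => hper j
    rw [Finset.sum_add_distrib, Finset.sum_add_distrib, ← Finset.mul_sum, ← Finset.mul_sum,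
      ← hDdef, hqm.2, mul_one] at hsum
    have helem : -(∑ i, r i * p i) + ∑ j, lam j * (∑ i, p i * W i j) ≤ G lam :=
      hGle lam _ ⟨p, hp, hpS, rfl⟩
    linarith
  -- F increases at most as much
  have hFbound : F lam' ≤ F lam + c + γ * D := by
    rw [hFeq lam', hFeq lam]
    set Zμ := ∑ j, (2:ℝ) ^ (-(lam j - c)) with hZμ
    have hZμpos : 0 < Zμ :=
      Finset.sum_pos (fun j _ => Real.rpow_pos_of_pos (by norm_num) _) hne
    have hZμ1 : 1 ≤ Zμ := by
      have h1 : ((2:ℝ) ^ (-(lam jc - c))) = 1 := by rw [← hjc]; simp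
      calc (1:ℝ) = (2:ℝ) ^ (-(lam jc - c)) := h1.symm
        _ ≤ Zμ := Finset.single_le_sum (f := fun j => (2:ℝ) ^ (-(lam j - c)))
            (fun j _ => (Real.rpow_pos_of_pos (by norm_num) _).le) (Finset.mem_univ jc)
    have hZsplit : ∑ j, (2:ℝ) ^ (-lam j) = (2:ℝ) ^ (-c) * Zμ := by
      rw [hZμ, Finset.mul_sum]
      refine Finset.sum_congr rfl fun j _ => ?_
      rw [← Real.rpow_add (by norm_num)]
      congr 1; ring
    have hlogZ : Real.logb 2 (∑ j, (2:ℝ) ^ (-lam j)) = -c + Real.logb 2 Zμ := by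
      rw [hZsplit, Real.logb_mul (by positivity) hZμpos.ne',
        Real.logb_rpow (by norm_num) (by norm_num)]
    have hper : ∀ j : Fin M, (2:ℝ) ^ (-lam' j)
        ≤ (2:ℝ) ^ (-(lam j - c)) + γ * L * (lam j - c - lam' j) := by
      intro j
      rcases le_or_gt (lam j - c) T with h | h
      · have hx : lam' j = lam j - c := min_eq_left h
        rw [hx]; simp
      · have hx : lam' j = T := min_eq_right h.le
        have hd0 : 0 ≤ lam j - c - T := by linarith
        have e1 : (2:ℝ) ^ (-(lam j - c)) = γ * (2:ℝ) ^ (-(lam j - c - T)) := by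
          rw [← h2T, ← Real.rpow_add (by norm_num)]
          congr 1; ring
        have e2 : (2:ℝ) ^ (-(lam j - c - T)) = Real.exp (L * -(lam j - c - T)) := by
          rw [Real.rpow_def_of_pos (by norm_num : (0:ℝ) < 2), ← hLdef]
        have e3 := Real.add_one_le_exp (L * -(lam j - c - T))
        rw [hx, h2T, e1, e2]
        nlinarith [Real.exp_pos (L * -(lam j - c - T)), mul_le_mul_of_nonneg_left e3 hγpos.le]
    have hsum : ∑ j, (2:ℝ) ^ (-lam' j) ≤ Zμ + γ * L * D := by
      have h := Finset.sum_le_sum (s := Finset.univ) fun j _ => hper j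
      rw [Finset.sum_add_distrib, ← Finset.mul_sum, ← hDdef, ← hZμ] at h
      exact h
    have hpos' : 0 < ∑ j, (2:ℝ) ^ (-lam' j) :=
      Finset.sum_pos (fun j _ => Real.rpow_pos_of_pos (by norm_num) _) hne
    have hx0 : 0 ≤ γ * L * D := by positivity
    have hle2 : ∑ j, (2:ℝ) ^ (-lam' j) ≤ Zμ * (1 + γ * L * D) := by
      nlinarith [mul_nonneg (sub_nonneg.mpr hZμ1) hx0]
    have hlog2 : Real.logb 2 (∑ j, (2:ℝ) ^ (-lam' j))
        ≤ Real.logb 2 Zμ + Real.logb 2 (1 + γ * L * D) := by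
      rw [← Real.logb_mul hZμpos.ne' (by positivity)]
      exact Real.logb_le_logb_of_le (by norm_num) hpos' hle2
    have hlog3 : Real.logb 2 (1 + γ * L * D) ≤ γ * D := by
      have h1 := Real.log_le_sub_one_of_pos (show (0:ℝ) < 1 + γ * L * D by positivity)
      rw [Real.logb, ← hLdef, div_le_iff₀ hL]
      nlinarith
    rw [hlogZ]
    linarith
  have hmemB : G lam' + F lam' ∈ B := ⟨lam', hnorm, rfl⟩
  calc sInf B ≤ G lam' + F lam' := csInf_le hBbdd hmemB
    _ ≤ G lam + F lam := by linarith
end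

section
/- Assume {p ∈ Δ_N : sᵀp = S} is nonempty. Then strong duality holds: max{ −rᵀp + H(q) : p ∈ Δ_N, q ∈ Δ_M, Wᵀp = q, sᵀp = S } = inf_{λ ∈ ℝ^M} ( G(λ) + F(λ) ). -/
open Real Finset Filter Topology

lemma tangent_aux (x y : ℝ) (hx : 0 ≤ x) (hy : 0 ≤ y) (hxy : x = 0 ∨ 0 < y) :
    (y - x) * (-Real.log y - 1) ≤ Real.negMulLog y - Real.negMulLog x := by
  rcases hxy with rfl | hy'
  · simp [Real.negMulLog]
    nlinarith [hy]
  · rcases eq_or_lt_of_le hx with rfl | hx'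
    · simp [Real.negMulLog]
      nlinarith [hy]
    · have h1 : Real.log (y / x) ≤ y / x - 1 := Real.log_le_sub_one_of_pos (by positivity)
      have h2 : Real.log (y / x) = Real.log y - Real.log x := Real.log_div (ne_of_gt hy') (ne_of_gt hx')
      have h3 : x * (Real.log y - Real.log x) ≤ y - x := by
        rw [← h2]
        calc x * Real.log (y / x) ≤ x * (y / x - 1) := by
              exact mul_le_mul_of_nonneg_left h1 hx
          _ = y - x := by field_simp
      simp only [Real.negMulLog]
      nlinarith [h3]

lemma gibbs_aux (a b : ℝ) (ha : 0 ≤ a) (hb : 0 < b) :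
    a * Real.log b - a * Real.log a ≤ b - a := by
  rcases eq_or_lt_of_le ha with rfl | ha'
  · simpa using hb.le
  · have h1 : Real.log (b / a) ≤ b / a - 1 := Real.log_le_sub_one_of_pos (by positivity)
    have h2 : Real.log (b / a) = Real.log b - Real.log a := Real.log_div (ne_of_gt hb) (ne_of_gt ha')
    have h3 := mul_le_mul_of_nonneg_left h1 ha
    rw [h2] at h3
    calc a * Real.log b - a * Real.log a = a * (Real.log b - Real.log a) := by ring
      _ ≤ a * (b / a - 1) := h3
      _ = b - a := by field_simp

lemma entropy2_mul_log2 {M : ℕ} (q : Fin M → ℝ) :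
    Real.log 2 * entropy2 q = ∑ j, Real.negMulLog (q j) := by
  unfold entropy2
  rw [Finset.mul_sum]
  refine Finset.sum_congr rfl fun j _ => ?_
  simp only [Real.negMulLog, Real.logb]
  have h2 : Real.log 2 ≠ 0 := by
    simpa using Real.log_ne_zero_of_pos_of_ne_one two_pos (by norm_num)
  field_simp

set_option maxHeartbeats 1000000 in
theorem stmt11 (N M : ℕ) (W : Matrix (Fin N) (Fin M) ℝ)
    (hWnn : ∀ i j, 0 ≤ W i j) (hWrow : ∀ i, ∑ j, W i j = 1)
    (s : Fin N → ℝ) (hs : ∀ i, 0 ≤ s i) (S : ℝ) (hS : 0 ≤ S)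
    (r : Fin N → ℝ) (hr : ∀ i, r i = -(∑ j, W i j * Real.logb 2 (W i j)))
    -- feasibility of the primal constraint set
    (hfeas : ∃ p ∈ stdSimplex ℝ (Fin N), (∑ i, s i * p i) = S)
    (F G : (Fin M → ℝ) → ℝ)
    (hF : ∀ lam, F lam = sSup {t | ∃ q ∈ stdSimplex ℝ (Fin M),
      t = entropy2 q - ∑ j, lam j * q j})
    (hG : ∀ lam, G lam = sSup {t | ∃ p ∈ stdSimplex ℝ (Fin N),
      (∑ i, s i * p i) = S ∧
        t = -(∑ i, r i * p i) + ∑ j, lam j * (∑ i, p i * W i j)}) :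
    sSup {t | ∃ p ∈ stdSimplex ℝ (Fin N), ∃ q ∈ stdSimplex ℝ (Fin M),
        (∀ j, ∑ i, p i * W i j = q j) ∧ (∑ i, s i * p i) = S ∧
          t = -(∑ i, r i * p i) + entropy2 q} =
      sInf {t | ∃ lam : Fin M → ℝ, t = G lam + F lam} := by
  classical
  obtain ⟨p₀, hp₀s, hp₀S⟩ := hfeas
  have hlog2 : (0:ℝ) < Real.log 2 := Real.log_pos (by norm_num)
  -- the feasible set P
  set P : Set (Fin N → ℝ) := {p | p ∈ stdSimplex ℝ (Fin N) ∧ ∑ i, s i * p i = S} with hPdef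
  have hPne : P.Nonempty := ⟨p₀, hp₀s, hp₀S⟩
  have hPc : IsCompact P := by
    have h : P = stdSimplex ℝ (Fin N) ∩ {p | ∑ i, s i * p i = S} := rfl
    rw [h]
    exact (isCompact_stdSimplex _ _).inter_right
      (isClosed_eq (continuous_finset_sum _ fun i _ =>
        (continuous_const.mul (continuous_apply i))) continuous_const)
  -- the output distribution map
  set Q : (Fin N → ℝ) → (Fin M → ℝ) := fun p j => ∑ i, p i * W i j with hQdef
  have hQmem : ∀ p ∈ stdSimplex ℝ (Fin N), Q p ∈ stdSimplex ℝ (Fin M) := by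
    intro p hp
    refine ⟨fun j => Finset.sum_nonneg fun i _ => mul_nonneg (hp.1 i) (hWnn i j), ?_⟩
    calc ∑ j, ∑ i, p i * W i j = ∑ i, ∑ j, p i * W i j := Finset.sum_comm
      _ = ∑ i, p i * ∑ j, W i j := by simp [Finset.mul_sum]
      _ = 1 := by simp [hWrow, hp.2]
  -- objective and cost
  set R : (Fin N → ℝ) → ℝ := fun p => ∑ i, r i * p i with hRdef
  set f : (Fin N → ℝ) → ℝ := fun p => -(R p) + entropy2 (Q p) with hfdef
  have hfc : Continuous f := by
    have hE : Continuous (entropy2 (M := M)) := by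
      unfold entropy2
      refine continuous_finset_sum _ fun j _ => ?_
      have h1 : Continuous fun x : ℝ => -(x * Real.logb 2 x) := by
        have : (fun x : ℝ => -(x * Real.logb 2 x)) =
            fun x : ℝ => -((x * Real.log x) / Real.log 2) := by
          funext x; simp [Real.logb]; ring
        rw [this]
        exact ((Real.continuous_mul_log).div_const _).neg
      exact h1.comp (continuous_apply j)
    refine Continuous.add ?_ ?_
    · exact (continuous_finset_sum _ fun i _ => (continuous_const.mul (continuous_apply i))).neg
    · exact hE.comp (continuous_pi fun j =>
        continuous_finset_sum _ fun i _ => ((continuous_apply i).mul continuous_const))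
  obtain ⟨ps, hpsP, hmax⟩ := hPc.exists_isMaxOn hPne hfc.continuousOn
  set qs : Fin M → ℝ := Q ps with hqsdef
  have hqsmem : qs ∈ stdSimplex ℝ (Fin M) := hQmem ps hpsP.1
  set V : ℝ := f ps with hVdef
  -- linearity helpers
  have hQlin : ∀ (p : Fin N → ℝ) (t : ℝ) (j : Fin M),
      Q (fun i => ps i + t * (p i - ps i)) j = qs j + t * (Q p j - qs j) := by
    intro p t j
    simp only [hQdef]
    have : ∀ i, (ps i + t * (p i - ps i)) * W i j
        = ps i * W i j + (t * (p i * W i j) - t * (ps i * W i j)) := fun i => by ring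
    rw [Finset.sum_congr rfl fun i _ => this i, Finset.sum_add_distrib,
      Finset.sum_sub_distrib, ← Finset.mul_sum, ← Finset.mul_sum]
    ring
  have hRlin : ∀ (p : Fin N → ℝ) (t : ℝ),
      R (fun i => ps i + t * (p i - ps i)) = R ps + t * (R p - R ps) := by
    intro p t
    simp only [hRdef]
    have : ∀ i, r i * (ps i + t * (p i - ps i))
        = r i * ps i + (t * (r i * p i) - t * (r i * ps i)) := fun i => by ring
    rw [Finset.sum_congr rfl fun i _ => this i, Finset.sum_add_distrib,
      Finset.sum_sub_distrib, ← Finset.mul_sum, ← Finset.mul_sum]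
    ring
  -- the basic variational inequality
  have hPhi : ∀ p ∈ P, ∀ t ∈ Set.Ioo (0:ℝ) 1,
      ∑ j, (Q p j - qs j) * (-Real.log (qs j + t * (Q p j - qs j)) - 1)
        ≤ Real.log 2 * (R p - R ps) := by

    intro p hp t ht
    set pt : Fin N → ℝ := fun i => ps i + t * (p i - ps i) with hptdef
    have hlin : ∀ (c : Fin N → ℝ),
        ∑ i, c i * pt i = (∑ i, c i * ps i) + t * ((∑ i, c i * p i) - ∑ i, c i * ps i) := by
      intro c
      have h : ∀ i, c i * pt i
          = c i * ps i + (t * (c i * p i) - t * (c i * ps i)) := fun i => by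
        simp only [hptdef]; ring
      rw [Finset.sum_congr rfl fun i _ => h i, Finset.sum_add_distrib,
        Finset.sum_sub_distrib, ← Finset.mul_sum, ← Finset.mul_sum]
      ring
    have hptP : pt ∈ P := by
      refine ⟨⟨fun i => ?_, ?_⟩, ?_⟩
      · have h1 : pt i = (1 - t) * ps i + t * p i := by simp only [hptdef]; ring
        rw [h1]
        have h2 := hpsP.1.1 i; have h3 := hp.1.1 i
        have := ht.1.le; have := ht.2.le
        nlinarith
      · have h := hlin (fun _ => 1)
        simp only [one_mul] at h
        rw [h, hpsP.1.2, hp.1.2]; ring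
      · have h := hlin s
        rw [h, hpsP.2, hp.2]; ring
    have hft : f pt ≤ f ps := hmax hptP
    have hRpt : R pt = R ps + t * (R p - R ps) := by
      simp only [hRdef]; exact hlin r
    have hE : entropy2 (Q pt) - entropy2 qs ≤ t * (R p - R ps) := by
      have h := hft
      simp only [hfdef] at h
      rw [← hqsdef] at h
      linarith [h, hRpt]
    have hQpt : ∀ j, Q pt j = qs j + t * (Q p j - qs j) := by
      intro j
      simp only [hQdef, hqsdef]
      have h : ∀ i, pt i * W i j
          = ps i * W i j + (t * (p i * W i j) - t * (ps i * W i j)) := fun i => by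
        simp only [hptdef]; ring
      rw [Finset.sum_congr rfl fun i _ => h i, Finset.sum_add_distrib,
        Finset.sum_sub_distrib, ← Finset.mul_sum, ← Finset.mul_sum]
      ring
    have hperj : ∀ j, t * ((Q p j - qs j) * (-Real.log (qs j + t * (Q p j - qs j)) - 1))
        ≤ Real.negMulLog (qs j + t * (Q p j - qs j)) - Real.negMulLog (qs j) := by
      intro j
      have hx : 0 ≤ qs j := hqsmem.1 j
      have hQpj : 0 ≤ Q p j := (hQmem p hp.1).1 j
      have hy : 0 ≤ qs j + t * (Q p j - qs j) := by nlinarith [ht.1.le, ht.2.le]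
      have hside : qs j = 0 ∨ 0 < qs j + t * (Q p j - qs j) := by
        rcases eq_or_lt_of_le hx with h0 | hpos
        · exact Or.inl h0.symm
        · right; nlinarith [ht.1, ht.2]
      have h := tangent_aux (qs j) (qs j + t * (Q p j - qs j)) hx hy hside
      calc t * ((Q p j - qs j) * (-Real.log (qs j + t * (Q p j - qs j)) - 1))
          = (qs j + t * (Q p j - qs j) - qs j) * (-Real.log (qs j + t * (Q p j - qs j)) - 1) := by
            ring
        _ ≤ _ := h
    have hsum : t * (∑ j, (Q p j - qs j) * (-Real.log (qs j + t * (Q p j - qs j)) - 1))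
        ≤ Real.log 2 * (entropy2 (Q pt) - entropy2 qs) := by
      rw [Finset.mul_sum]
      calc ∑ j, t * ((Q p j - qs j) * (-Real.log (qs j + t * (Q p j - qs j)) - 1))
          ≤ ∑ j, (Real.negMulLog (qs j + t * (Q p j - qs j)) - Real.negMulLog (qs j)) :=
            Finset.sum_le_sum fun j _ => hperj j
        _ = ∑ j, Real.negMulLog (Q pt j) - ∑ j, Real.negMulLog (qs j) := by
            rw [Finset.sum_sub_distrib]
            congr 1
            exact Finset.sum_congr rfl fun j _ => by rw [hQpt j]
        _ = Real.log 2 * (entropy2 (Q pt) - entropy2 qs) := by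
            rw [mul_sub, entropy2_mul_log2, entropy2_mul_log2]
    have hfinal : t * (∑ j, (Q p j - qs j) * (-Real.log (qs j + t * (Q p j - qs j)) - 1))
        ≤ t * (Real.log 2 * (R p - R ps)) := by
      calc t * (∑ j, (Q p j - qs j) * (-Real.log (qs j + t * (Q p j - qs j)) - 1))
          ≤ Real.log 2 * (entropy2 (Q pt) - entropy2 qs) := hsum
        _ ≤ Real.log 2 * (t * (R p - R ps)) := by
            exact mul_le_mul_of_nonneg_left hE hlog2.le
        _ = t * (Real.log 2 * (R p - R ps)) := by ring
    exact le_of_mul_le_mul_left hfinal ht.1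
  -- support condition
  have hsupp : ∀ p ∈ P, ∀ j, qs j = 0 → Q p j = 0 := by

    intro p hp j0 hqs0
    by_contra hne
    have hc : 0 < Q p j0 := lt_of_le_of_ne ((hQmem p hp.1).1 j0) (Ne.symm hne)
    have hcoordle1 : ∀ q : Fin M → ℝ, q ∈ stdSimplex ℝ (Fin M) → ∀ j, q j ≤ 1 := by
      intro q hq j
      calc q j ≤ ∑ j', q j' := Finset.single_le_sum (fun j' _ => hq.1 j') (Finset.mem_univ j)
        _ = 1 := hq.2
    have hQle1 : ∀ j, Q p j ≤ 1 := hcoordle1 _ (hQmem p hp.1)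
    have hqsle1 : ∀ j, qs j ≤ 1 := hcoordle1 _ hqsmem
    have hperlb : ∀ (j : Fin M) (t : ℝ), 0 < t → t ≤ 1/2 →
        Real.log (qs j / 2) - 1
          ≤ (Q p j - qs j) * (-Real.log (qs j + t * (Q p j - qs j)) - 1) := by
      intro j t ht0 ht2
      have hQpj : 0 ≤ Q p j := (hQmem p hp.1).1 j
      rcases eq_or_lt_of_le (hqsmem.1 j) with h0 | hpos
      · have hq0 : qs j = 0 := h0.symm
        rw [hq0]
        have hyle1 : t * Q p j ≤ 1 := by nlinarith [hQle1 j]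
        have hy0 : 0 ≤ t * Q p j := by positivity
        have hlog : Real.log (t * Q p j) ≤ 0 := Real.log_nonpos hy0 hyle1
        have h1 : 0 ≤ Q p j * (-Real.log (t * Q p j)) := by nlinarith
        simp only [Real.log_zero, zero_div, sub_zero, zero_add]
        nlinarith [hQle1 j]
      · have hd1 : Q p j - qs j ≤ 1 := by linarith [hQle1 j]
        have hdm1 : -(1:ℝ) ≤ Q p j - qs j := by linarith [hqsle1 j]
        have hy1 : qs j + t * (Q p j - qs j) ≤ 1 := by
          have e1 : (0:ℝ) ≤ (1 - t) * (1 - qs j) :=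
            mul_nonneg (by linarith) (by linarith [hqsle1 j])
          have e2 : (0:ℝ) ≤ t * (1 - Q p j) := mul_nonneg ht0.le (by linarith [hQle1 j])
          nlinarith [e1, e2]
        have hy2 : qs j / 2 ≤ qs j + t * (Q p j - qs j) := by nlinarith
        have hylb : 0 < qs j + t * (Q p j - qs j) := by linarith [hy2, hpos]
        have hlogy1 : Real.log (qs j + t * (Q p j - qs j)) ≤ 0 := Real.log_nonpos hylb.le hy1
        have hlogy2 : Real.log (qs j / 2) ≤ Real.log (qs j + t * (Q p j - qs j)) :=
          Real.log_le_log (by positivity) hy2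
        rcases le_or_gt 0 (Q p j - qs j) with hd | hd
        · have hlq : Real.log (qs j / 2) ≤ 0 :=
            Real.log_nonpos (by positivity) (by linarith [hqsle1 j])
          nlinarith
        · nlinarith
    set c : ℝ := Q p j0 with hcdef
    set Cc : ℝ := Real.log 2 * (R p - R ps) with hCcdef
    set B : ℝ := ∑ j ∈ Finset.univ.erase j0, (Real.log (qs j / 2) - 1) with hBdef
    set D : ℝ := Cc - B + c * Real.log c + c with hDdef
    set t0 : ℝ := min (1/2) (Real.exp (-(D / c + 1))) with ht0def
    have ht00 : 0 < t0 := lt_min (by norm_num) (Real.exp_pos _)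
    have ht01 : t0 < 1 := lt_of_le_of_lt (min_le_left _ _) (by norm_num)
    have ht02 : t0 ≤ 1/2 := min_le_left _ _
    have hPhit := hPhi p hp t0 ⟨ht00, ht01⟩
    have hsplit : ∑ j, (Q p j - qs j) * (-Real.log (qs j + t0 * (Q p j - qs j)) - 1)
        = (Q p j0 - qs j0) * (-Real.log (qs j0 + t0 * (Q p j0 - qs j0)) - 1)
          + ∑ j ∈ Finset.univ.erase j0,
            (Q p j - qs j) * (-Real.log (qs j + t0 * (Q p j - qs j)) - 1) :=
      (Finset.add_sum_erase _ _ (Finset.mem_univ j0)).symm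
    have hrest : B ≤ ∑ j ∈ Finset.univ.erase j0,
        (Q p j - qs j) * (-Real.log (qs j + t0 * (Q p j - qs j)) - 1) := by
      rw [hBdef]
      exact Finset.sum_le_sum fun j _ => hperlb j t0 ht00 ht02
    have hj0 : (Q p j0 - qs j0) * (-Real.log (qs j0 + t0 * (Q p j0 - qs j0)) - 1)
        = c * (-(Real.log t0 + Real.log c) - 1) := by
      rw [hqs0]
      rw [show (0:ℝ) + t0 * (Q p j0 - 0) = t0 * Q p j0 by ring]
      rw [Real.log_mul (ne_of_gt ht00) (ne_of_gt hc)]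
      ring
    have hineq : c * (-Real.log t0) ≤ D := by
      have h1 := hPhit
      rw [hsplit, hj0] at h1
      have h2 : c * (-(Real.log t0 + Real.log c) - 1) + B ≤ Cc := by
        linarith [hrest]
      have h2' : c * (-(Real.log t0 + Real.log c) - 1)
          = c * (-Real.log t0) - c * Real.log c - c := by ring
      rw [hDdef]
      linarith [h2, h2'.le, h2'.symm.le]
    have hlogt0 : Real.log t0 ≤ -(D / c + 1) := by
      calc Real.log t0 ≤ Real.log (Real.exp (-(D / c + 1))) :=
            Real.log_le_log ht00 (min_le_right _ _)
        _ = -(D / c + 1) := Real.log_exp _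
    have h3 : c * (D / c + 1) ≤ D := by
      have h5 : D / c + 1 ≤ -Real.log t0 := by linarith [hlogt0]
      calc c * (D / c + 1) ≤ c * (-Real.log t0) := mul_le_mul_of_nonneg_left h5 hc.le
        _ ≤ D := hineq
    have h4 : c * (D / c + 1) = D + c := by
      rw [mul_add, mul_div_cancel₀ _ (ne_of_gt hc), mul_one]
    linarith [hc]
  -- KKT inequality
  have hK : ∀ p ∈ P, ∑ j, Q p j * (-Real.log (qs j))
      ≤ Real.log 2 * (R p - R ps) + ∑ j, qs j * (-Real.log (qs j)) := by

    intro p hp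
    set d : Fin M → ℝ := fun j => Q p j - qs j with hddef
    have htend : Filter.Tendsto (fun t : ℝ => ∑ j, d j * (-Real.log (qs j + t * d j) - 1))
        (nhdsWithin 0 (Set.Ioi 0)) (nhds (∑ j, d j * (-Real.log (qs j) - 1))) := by
      apply tendsto_finset_sum
      intro j _
      by_cases hd0 : d j = 0
      · simp only [hd0, zero_mul]
        exact tendsto_const_nhds
      · have hq0 : qs j ≠ 0 := by
          intro h
          exact hd0 (by simp [hddef, hsupp p hp j h, h])
        have hca : ContinuousAt (fun t : ℝ => d j * (-Real.log (qs j + t * d j) - 1)) 0 := by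
          have h1 : ContinuousAt (fun t : ℝ => qs j + t * d j) 0 := by fun_prop
          have h2 : ContinuousAt (fun t : ℝ => Real.log (qs j + t * d j)) 0 :=
            ContinuousAt.log h1 (by simpa using hq0)
          exact continuousAt_const.mul ((h2.neg).sub continuousAt_const)
        have h3 : Filter.Tendsto (fun t : ℝ => d j * (-Real.log (qs j + t * d j) - 1))
            (nhdsWithin 0 (Set.Ioi 0)) (nhds (d j * (-Real.log (qs j + 0 * d j) - 1))) :=
          hca.tendsto.mono_left nhdsWithin_le_nhds
        simpa using h3
    have hev : ∀ᶠ t in nhdsWithin (0:ℝ) (Set.Ioi 0),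
        (∑ j, d j * (-Real.log (qs j + t * d j) - 1)) ≤ Real.log 2 * (R p - R ps) := by
      filter_upwards [Ioo_mem_nhdsGT_of_mem (Set.left_mem_Ico.mpr zero_lt_one)] with t ht
      exact hPhi p hp t ht
    have hLC : (∑ j, d j * (-Real.log (qs j) - 1)) ≤ Real.log 2 * (R p - R ps) :=
      le_of_tendsto htend hev
    have hdsum : ∑ j, d j = 0 := by
      simp only [hddef]
      rw [Finset.sum_sub_distrib, (hQmem p hp.1).2, hqsmem.2]; ring
    have hLeq : (∑ j, d j * (-Real.log (qs j) - 1))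
        = ∑ j, Q p j * (-Real.log (qs j)) - ∑ j, qs j * (-Real.log (qs j)) - ∑ j, d j := by
      rw [← Finset.sum_sub_distrib, ← Finset.sum_sub_distrib]
      refine Finset.sum_congr rfl fun j _ => ?_
      simp only [hddef]; ring
    rw [hLeq, hdsum] at hLC
    linarith [hLC]
  -- primal value
  have hAeq : sSup {t | ∃ p ∈ stdSimplex ℝ (Fin N), ∃ q ∈ stdSimplex ℝ (Fin M),
        (∀ j, ∑ i, p i * W i j = q j) ∧ (∑ i, s i * p i) = S ∧
          t = -(∑ i, r i * p i) + entropy2 q} = V := by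
    apply IsGreatest.csSup_eq
    constructor
    · exact ⟨ps, hpsP.1, qs, hqsmem, fun j => rfl, hpsP.2, rfl⟩
    · rintro t ⟨p, hp, q, hq, hq', hS', rfl⟩
      have hqQ : q = Q p := funext fun j => (hq' j).symm
      rw [hqQ]
      exact hmax (show p ∈ P from ⟨hp, hS'⟩)
  -- weak duality
  have hlb : ∀ b ∈ {t | ∃ lam : Fin M → ℝ, t = G lam + F lam}, V ≤ b := by

    rintro b ⟨lam, rfl⟩
    rw [hG lam, hF lam]
    have hEcont : Continuous (entropy2 (M := M)) := by
      unfold entropy2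
      refine continuous_finset_sum _ fun j _ => ?_
      have h1 : Continuous fun x : ℝ => -(x * Real.logb 2 x) := by
        have h : (fun x : ℝ => -(x * Real.logb 2 x)) =
            fun x : ℝ => -((x * Real.log x) / Real.log 2) := by
          funext x; simp [Real.logb]; ring
        rw [h]
        exact ((Real.continuous_mul_log).div_const _).neg
      exact h1.comp (continuous_apply j)
    have hGB : BddAbove {t | ∃ p ∈ stdSimplex ℝ (Fin N), (∑ i, s i * p i) = S ∧
        t = -(∑ i, r i * p i) + ∑ j, lam j * (∑ i, p i * W i j)} := by
      have himg : {t | ∃ p ∈ stdSimplex ℝ (Fin N), (∑ i, s i * p i) = S ∧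
          t = -(∑ i, r i * p i) + ∑ j, lam j * (∑ i, p i * W i j)}
          = (fun p => -(∑ i, r i * p i) + ∑ j, lam j * (∑ i, p i * W i j)) '' P := by
        ext t
        constructor
        · rintro ⟨p, hp, hpS, rfl⟩; exact ⟨p, ⟨hp, hpS⟩, rfl⟩
        · rintro ⟨p, ⟨hp, hpS⟩, rfl⟩; exact ⟨p, hp, hpS, rfl⟩
      rw [himg]
      refine (hPc.image ?_).bddAbove
      refine Continuous.add ?_ ?_
      · exact (continuous_finset_sum _ fun i _ => continuous_const.mul (continuous_apply i)).neg
      · exact continuous_finset_sum _ fun j _ => continuous_const.mul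
          (continuous_finset_sum _ fun i _ => (continuous_apply i).mul continuous_const)
    have hFB : BddAbove {t | ∃ q ∈ stdSimplex ℝ (Fin M),
        t = entropy2 q - ∑ j, lam j * q j} := by
      have himg : {t | ∃ q ∈ stdSimplex ℝ (Fin M), t = entropy2 q - ∑ j, lam j * q j}
          = (fun q => entropy2 q - ∑ j, lam j * q j) '' (stdSimplex ℝ (Fin M)) := by
        ext t
        constructor
        · rintro ⟨q, hq, rfl⟩; exact ⟨q, hq, rfl⟩
        · rintro ⟨q, hq, rfl⟩; exact ⟨q, hq, rfl⟩
      rw [himg]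
      refine ((isCompact_stdSimplex _ _).image ?_).bddAbove
      exact hEcont.sub (continuous_finset_sum _ fun j _ => continuous_const.mul (continuous_apply j))
    have hg1 : (-(∑ i, r i * ps i) + ∑ j, lam j * (∑ i, ps i * W i j))
        ∈ {t | ∃ p ∈ stdSimplex ℝ (Fin N), (∑ i, s i * p i) = S ∧
          t = -(∑ i, r i * p i) + ∑ j, lam j * (∑ i, p i * W i j)} :=
      ⟨ps, hpsP.1, hpsP.2, rfl⟩
    have hg2 : (entropy2 qs - ∑ j, lam j * qs j)
        ∈ {t | ∃ q ∈ stdSimplex ℝ (Fin M), t = entropy2 q - ∑ j, lam j * q j} :=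
      ⟨qs, hqsmem, rfl⟩
    have hVeq : V = (-(∑ i, r i * ps i) + ∑ j, lam j * (∑ i, ps i * W i j))
        + (entropy2 qs - ∑ j, lam j * qs j) := by
      have hq : ∀ j, qs j = ∑ i, ps i * W i j := fun j => by simp [hqsdef, hQdef]
      have hsum : (∑ j, lam j * (∑ i, ps i * W i j)) = ∑ j, lam j * qs j :=
        Finset.sum_congr rfl fun j _ => by rw [← hq j]
      simp only [hVdef, hfdef, hRdef]
      rw [hsum]; ring
    rw [hVeq]
    exact add_le_add (le_csSup hGB hg1) (le_csSup hFB hg2)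
  -- strong duality
  have hub : ∀ ε : ℝ, 0 < ε → ∃ lam : Fin M → ℝ, G lam + F lam ≤ V + ε := by

    intro eps heps
    have hN : 0 < N := by
      rcases Nat.eq_zero_or_pos N with h | h
      · exfalso; have h2 := hp₀s.2; subst h; simp at h2
      · exact h
    have hM : 0 < M := by
      rcases Nat.eq_zero_or_pos M with h | h
      · exfalso; have h2 := hWrow ⟨0, hN⟩; subst h; simp at h2
      · exact h
    have hM0 : (0:ℝ) < M := by exact_mod_cast hM
    set dl : ℝ := 1 - Real.exp (-(eps * Real.log 2)) with hdldef
    have h1d : 1 - dl = Real.exp (-(eps * Real.log 2)) := by rw [hdldef]; ring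
    have h1dpos : 0 < 1 - dl := h1d ▸ Real.exp_pos _
    set qt : Fin M → ℝ := fun j => (1 - dl) * qs j + dl / M with hqtdef
    have hdlM : 0 < dl / M := by
      have h : Real.exp (-(eps * Real.log 2)) < 1 := by
        rw [← Real.exp_zero]
        exact Real.exp_lt_exp.mpr (by nlinarith [hlog2])
      have hdl0 : 0 < dl := by rw [hdldef]; linarith
      positivity
    have hqtpos : ∀ j, 0 < qt j := fun j =>
      add_pos_of_nonneg_of_pos (mul_nonneg h1dpos.le (hqsmem.1 j)) hdlM
    have hqtsum : ∑ j, qt j = 1 := by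
      simp only [hqtdef]
      rw [Finset.sum_add_distrib, ← Finset.mul_sum, hqsmem.2, Finset.sum_const,
        Finset.card_univ, Fintype.card_fin, nsmul_eq_mul]
      field_simp
      ring
    set lam : Fin M → ℝ := fun j => -Real.logb 2 (qt j) with hlamdef
    refine ⟨lam, ?_⟩
    have hlamQ : ∀ (q : Fin M → ℝ), Real.log 2 * ∑ j, lam j * q j
        = ∑ j, q j * (-Real.log (qt j)) := by
      intro q
      rw [Finset.mul_sum]
      refine Finset.sum_congr rfl fun j _ => ?_
      simp only [hlamdef, Real.logb]
      have h2 : Real.log 2 ≠ 0 := ne_of_gt hlog2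
      field_simp
    have hFle : F lam ≤ 0 := by
      rw [hF lam]
      refine csSup_le ⟨entropy2 qt - ∑ j, lam j * qt j,
        ⟨qt, ⟨fun j => (hqtpos j).le, hqtsum⟩, rfl⟩⟩ ?_
      rintro t ⟨q, hq, rfl⟩
      have key : Real.log 2 * (entropy2 q - ∑ j, lam j * q j) ≤ Real.log 2 * 0 := by
        rw [mul_sub, entropy2_mul_log2, hlamQ q, mul_zero]
        calc (∑ j, Real.negMulLog (q j)) - ∑ j, q j * (-Real.log (qt j))
            = ∑ j, (q j * Real.log (qt j) - q j * Real.log (q j)) := by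
              rw [← Finset.sum_sub_distrib]
              refine Finset.sum_congr rfl fun j _ => ?_
              simp only [Real.negMulLog]; ring
          _ ≤ ∑ j, (qt j - q j) :=
              Finset.sum_le_sum fun j _ => gibbs_aux (q j) (qt j) (hq.1 j) (hqtpos j)
          _ = 0 := by rw [Finset.sum_sub_distrib, hqtsum, hq.2]; ring
      exact le_of_mul_le_mul_left key hlog2
    have hGle : G lam ≤ V + eps := by
      rw [hG lam]
      refine csSup_le ⟨_, ⟨ps, hpsP.1, hpsP.2, rfl⟩⟩ ?_
      rintro t ⟨p, hp, hpS, rfl⟩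
      have hpP : p ∈ P := ⟨hp, hpS⟩
      have hperj : ∀ j, Q p j * (-Real.log (qt j))
          ≤ Q p j * (-Real.log (qs j)) + Q p j * (eps * Real.log 2) := by
        intro j
        rcases eq_or_lt_of_le (hqsmem.1 j) with h0 | hpos
        · have hq0 : qs j = 0 := h0.symm
          have hQ0 : Q p j = 0 := hsupp p hpP j hq0
          rw [hQ0]; simp
        · have h1 : (1 - dl) * qs j ≤ qt j := by
            simp only [hqtdef]
            linarith [hdlM.le]
          have h2 : 0 < (1 - dl) * qs j := mul_pos h1dpos hpos
          have h3 : Real.log ((1 - dl) * qs j) ≤ Real.log (qt j) := Real.log_le_log h2 h1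
          have h4 : Real.log ((1 - dl) * qs j) = -(eps * Real.log 2) + Real.log (qs j) := by
            rw [Real.log_mul (ne_of_gt h1dpos) (ne_of_gt hpos), h1d, Real.log_exp]
          have h5 : -Real.log (qt j) ≤ -Real.log (qs j) + eps * Real.log 2 := by linarith
          have h6 : 0 ≤ Q p j := (hQmem p hp).1 j
          nlinarith
      have hsum1 : ∑ j, Q p j * (-Real.log (qt j))
          ≤ ∑ j, Q p j * (-Real.log (qs j)) + eps * Real.log 2 := by
        calc ∑ j, Q p j * (-Real.log (qt j))
            ≤ ∑ j, (Q p j * (-Real.log (qs j)) + Q p j * (eps * Real.log 2)) :=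
              Finset.sum_le_sum fun j _ => hperj j
          _ = ∑ j, Q p j * (-Real.log (qs j)) + (eps * Real.log 2) * ∑ j, Q p j := by
              rw [Finset.sum_add_distrib]
              congr 1
              rw [Finset.mul_sum]
              exact Finset.sum_congr rfl fun j _ => by ring
          _ = ∑ j, Q p j * (-Real.log (qs j)) + eps * Real.log 2 := by
              rw [(hQmem p hp).2]; ring
      have hKp := hK p hpP
      have hVexp : Real.log 2 * V
          = Real.log 2 * (-(R ps)) + ∑ j, qs j * (-Real.log (qs j)) := by
        have h := entropy2_mul_log2 qs
        have h2 : (∑ j, Real.negMulLog (qs j)) = ∑ j, qs j * (-Real.log (qs j)) :=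
          Finset.sum_congr rfl fun j _ => by simp only [Real.negMulLog]; ring
        simp only [hVdef, hfdef]
        rw [← hqsdef, mul_add, h, h2]
      have hmain : Real.log 2 * (-(∑ i, r i * p i) + ∑ j, lam j * (∑ i, p i * W i j))
          ≤ Real.log 2 * (V + eps) := by
        have hQeq : (∑ j, lam j * (∑ i, p i * W i j)) = ∑ j, lam j * Q p j :=
          Finset.sum_congr rfl fun j _ => by simp [hQdef]
        have hReq : (∑ i, r i * p i) = R p := by simp [hRdef]
        rw [hQeq, hReq, mul_add, hlamQ (Q p), mul_add, hVexp]
        have heq : Real.log 2 * eps = eps * Real.log 2 := by ring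
        linarith [hsum1, hKp]
      exact le_of_mul_le_mul_left hmain hlog2
    linarith [hFle, hGle]
  -- assembly
  have hBne : Set.Nonempty {t | ∃ lam : Fin M → ℝ, t = G lam + F lam} := ⟨G 0 + F 0, 0, rfl⟩
  have h1 : V ≤ sInf {t | ∃ lam : Fin M → ℝ, t = G lam + F lam} := le_csInf hBne hlb
  have h2 : sInf {t | ∃ lam : Fin M → ℝ, t = G lam + F lam} ≤ V := by
    apply le_of_forall_pos_le_add
    intro ε hε
    obtain ⟨lam, hlam⟩ := hub ε hε
    exact le_trans (csInf_le ⟨V, hlb⟩ ⟨lam, rfl⟩) hlam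
  rw [hAeq]
  exact le_antisymm h1 h2
end
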